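/- arXiv:2009.10313 — 6 statements merged into one kernel-verified Lean document; each statement's English description precedes it below -/
import Mathlib

section
/- Suppose f(α) = 0 and δ ∈ L satisfies δ(α) ≠ 0. Then for every ξ ∈ L and every polynomial P ∈ k[X] representing δξ² in L, one has P(α) = δ(α)·ξ(α)²; consequently P(α) = 0 if and only if γ₁v₁(ξ) + γ₂v₂(ξ) + γ₃v₃(ξ) + γ₄v₄(ξ) + γ₅v₅(ξ) + γ₆v₆(ξ) = 0, where γ₁, …, γ₆ ∈ k are defined by f(x) = (x − α)(γ₁ + γ₂x + γ₃x² + γ₄x³ + γ₅x⁴ + γ₆x⁵). (This is the algebraic content of the statement that the genus 5 curve Z_δ is the intersection of the desingularized twisted Kummer surface 𝒴_δ ⊂ P(L) with the hyperplane γ₁v₁ + ⋯ + γ₆v₆ = 0.) -/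
open Polynomial Matrix

noncomputable section

/-- The sextic polynomial `f = f₀ + f₁X + ⋯ + f₆X⁶` with coefficient function `fc`. -/
def sexticPoly {k : Type*} [Field k] (fc : ℕ → k) : Polynomial k :=
  ∑ i ∈ Finset.range 7, C (fc i) * X ^ i

/-- The polynomial `gᵢ = fᵢ₊₁ + fᵢ₊₂X + ⋯ + f₆X^(5−i)` (0-based index `i : Fin 6`). -/
def gPoly {k : Type*} [Field k] (fc : ℕ → k) (i : Fin 6) : Polynomial k :=
  ∑ j ∈ Finset.range (6 - (i : ℕ)), C (fc ((i : ℕ) + 1 + j)) * X ^ j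

/-- The matrix `R` (0-based indices): `R i j = 1` if `i = j + 1`, `R i 5 = −fᵢ/f₆`. -/
def Rmat {k : Type*} [Field k] (fc : ℕ → k) : Matrix (Fin 6) (Fin 6) k :=
  Matrix.of fun i j =>
    if (j : ℕ) = 5 then -fc i / fc 6 else if (i : ℕ) = (j : ℕ) + 1 then 1 else 0

/-- The matrix `T` (0-based indices): `T i j = f_{i+j+1}` (with `f_m = 0` for `m > 6`). -/
def Tmat {k : Type*} [Field k] (fc : ℕ → k) : Matrix (Fin 6) (Fin 6) k :=
  Matrix.of fun i j => fc ((i : ℕ) + (j : ℕ) + 1)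

/-- The symmetric matrix `∑_{i=0}^{5} f₆ dᵢ R^{i+j} T` of the quadratic form `Q_j^{(δ)}`,
for `δ = d₀ + d₁X + ⋯ + d₅X⁵`. -/
def Qmat {k : Type*} [Field k] (fc : ℕ → k) (d : Fin 6 → k) (j : ℕ) :
    Matrix (Fin 6) (Fin 6) k :=
  ∑ i : Fin 6, (fc 6 * d i) • (Rmat fc ^ ((i : ℕ) + j) * Tmat fc)

/-- The quadratic form `Q_j^{(δ)}` evaluated on the coordinate vector `w` (in the basis
`g₁, …, g₆`). -/
def Qform {k : Type*} [Field k] (fc : ℕ → k) (d : Fin 6 → k) (j : ℕ) (w : Fin 6 → k) : k :=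
  w ⬝ᵥ (Qmat fc d j).mulVec w

/-- The polynomial `d₀ + d₁X + ⋯ + d₅X⁵` representing the twist parameter `δ`. -/
def deltaPoly {k : Type*} [Field k] (d : Fin 6 → k) : Polynomial k :=
  ∑ i : Fin 6, C (d i) * X ^ (i : ℕ)

/-- The polynomial `∑ wᵢ gᵢ` representing the element `ξ ∈ L` with coordinate vector `w`
in the basis `g₁, …, g₆`. -/
def xiPoly {k : Type*} [Field k] (fc : ℕ → k) (w : Fin 6 → k) : Polynomial k :=
  ∑ i : Fin 6, C (w i) * gPoly fc i

end

/-- Taylor-type expansion: `f(X) = (X - α)·∑ gᵢ(α) Xⁱ + f(α)`. -/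
lemma sextic_expand {k : Type*} [Field k] (fc : ℕ → k) (α : k) :
    sexticPoly fc = (X - C α) * (∑ i : Fin 6, C ((gPoly fc i).eval α) * X ^ (i : ℕ))
      + C ((sexticPoly fc).eval α) := by
  simp only [sexticPoly, gPoly, Fin.sum_univ_six,
    show ((0:Fin 6):ℕ) = 0 from rfl, show ((1:Fin 6):ℕ) = 1 from rfl,
    show ((2:Fin 6):ℕ) = 2 from rfl, show ((3:Fin 6):ℕ) = 3 from rfl,
    show ((4:Fin 6):ℕ) = 4 from rfl, show ((5:Fin 6):ℕ) = 5 from rfl,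
    Finset.sum_range_succ, Finset.sum_range_zero, eval_add, eval_mul, eval_C,
    eval_pow, eval_X, eval_zero, C_add, C_mul, map_pow, C_0, zero_add, add_zero]
  ring

set_option maxHeartbeats 1000000 in
/-- If `f(α) = 0` and `δ(α) ≠ 0`, then for every `ξ ∈ L` (with coordinate vector `w` in
the basis `g₁, …, g₆`) and every polynomial `P` representing `δξ²` in `L`, one has
`P(α) = δ(α)·ξ(α)²`; consequently `P(α) = 0` iff `γ₁v₁(ξ) + ⋯ + γ₆v₆(ξ) = 0`, where the
`γᵢ` are the coefficients of `f(x)/(x − α)`. -/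
theorem hyperplane_section {k : Type*} [Field k] (fc : ℕ → k)
    (hdeg : ∀ m, 7 ≤ m → fc m = 0) (hf6 : fc 6 ≠ 0)
    (α : k) (hα : (sexticPoly fc).eval α = 0)
    (γ : Fin 6 → k)
    (hγ : sexticPoly fc = (X - C α) * ∑ i : Fin 6, C (γ i) * X ^ (i : ℕ))
    (d : Fin 6 → k) (hδα : (deltaPoly d).eval α ≠ 0)
    (w : Fin 6 → k) (P : Polynomial k)
    (hP : AdjoinRoot.mk (sexticPoly fc) P =
      AdjoinRoot.mk (sexticPoly fc) (deltaPoly d) *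
        AdjoinRoot.mk (sexticPoly fc) (xiPoly fc w) ^ 2) :
    P.eval α = (deltaPoly d).eval α * ((xiPoly fc w).eval α) ^ 2 ∧
      (P.eval α = 0 ↔ ∑ i : Fin 6, γ i * w i = 0) := by
  -- Part 1: P(α) = δ(α) ξ(α)²
  have hdvd : sexticPoly fc ∣ P - deltaPoly d * xiPoly fc w ^ 2 := by
    rw [← AdjoinRoot.mk_eq_mk, hP, _root_.map_mul, map_pow]
  obtain ⟨q, hq⟩ := hdvd
  have h1 : P.eval α = (deltaPoly d).eval α * ((xiPoly fc w).eval α) ^ 2 := by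
    have := congrArg (Polynomial.eval α) hq
    simp only [eval_sub, eval_mul, eval_pow, hα, zero_mul] at this
    linear_combination this
  refine ⟨h1, ?_⟩
  -- γ i = gᵢ(α)
  have hexp : sexticPoly fc
      = (X - C α) * ∑ i : Fin 6, C ((gPoly fc i).eval α) * X ^ (i : ℕ) := by
    have := sextic_expand fc α
    rw [hα, C_0, add_zero] at this
    exact this
  have hXα : (X - C α : Polynomial k) ≠ 0 := X_sub_C_ne_zero α
  have hsum : (∑ i : Fin 6, (C (γ i) : Polynomial k) * X ^ (i : ℕ))
      = ∑ i : Fin 6, C ((gPoly fc i).eval α) * X ^ (i : ℕ) :=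
    mul_left_cancel₀ hXα (hγ ▸ hexp)
  have hγi : ∀ i : Fin 6, γ i = (gPoly fc i).eval α := by
    intro i
    have := congrArg (fun p => Polynomial.coeff p (i : ℕ)) hsum
    fin_cases i <;>
      simpa [Fin.sum_univ_six, Polynomial.coeff_C_mul, Polynomial.coeff_X_pow,
        show ((3:Fin 6):ℕ) = 3 from rfl, show ((4:Fin 6):ℕ) = 4 from rfl,
        show ((5:Fin 6):ℕ) = 5 from rfl] using this
  -- ξ(α) = ∑ wᵢ gᵢ(α)
  have hxi : (xiPoly fc w).eval α = ∑ i : Fin 6, w i * (gPoly fc i).eval α := by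
    simp [xiPoly, eval_finset_sum]
  have hsum2 : (∑ i : Fin 6, γ i * w i) = (xiPoly fc w).eval α := by
    rw [hxi]
    exact Finset.sum_congr rfl fun i _ => by rw [hγi i, mul_comm]
  rw [h1, hsum2]
  constructor
  · intro h
    rcases mul_eq_zero.mp h with h' | h'
    · exact absurd h' hδα
    · exact pow_eq_zero_iff (by norm_num) |>.mp h'
  · intro h
    rw [h]
    simp
end

section
/- Suppose f(α) = 0 for some α ∈ k, and let ξ ∈ L satisfy Q₀^{(δ)}(ξ) = Q₁^{(δ)}(ξ) = Q₂^{(δ)}(ξ) = 0 and ξ(α) = 0. Then in L one has the identity f₆·δ·ξ² = image of the polynomial (X − α)·(f₆Q₃^{(δ)}(ξ)·X + (f₅ + f₆α)Q₃^{(δ)}(ξ) + f₆Q₄^{(δ)}(ξ)). (This is the explicit formula underlying the twisted duplication map π̄_δ : Z_δ → P¹, namely π̄_δ(ξ) = (−(f₅ + f₆α)Q₃^{(δ)}(ξ) − f₆Q₄^{(δ)}(ξ) : f₆Q₃^{(δ)}(ξ)).) -/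
open Polynomial Matrix

namespace TD
@[simp] lemma vec6_at0 {α : Type*} (a b c d e f : α) : ![a,b,c,d,e,f] 0 = a := rfl
@[simp] lemma vec6_at1 {α : Type*} (a b c d e f : α) : ![a,b,c,d,e,f] 1 = b := rfl
@[simp] lemma vec6_at2 {α : Type*} (a b c d e f : α) : ![a,b,c,d,e,f] 2 = c := rfl
@[simp] lemma vec6_at3 {α : Type*} (a b c d e f : α) : ![a,b,c,d,e,f] 3 = d := rfl
@[simp] lemma vec6_at4 {α : Type*} (a b c d e f : α) : ![a,b,c,d,e,f] 4 = e := rfl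
@[simp] lemma vec6_at5 {α : Type*} (a b c d e f : α) : ![a,b,c,d,e,f] 5 = f := rfl
end TD
namespace TD
open Polynomial Matrix
noncomputable section
variable {k : Type*} [Field k] (fc : ℕ → k)

@[simp] lemma fv0 : ((0 : Fin 6) : ℕ) = 0 := rfl
@[simp] lemma fv1 : ((1 : Fin 6) : ℕ) = 1 := rfl
@[simp] lemma fv2 : ((2 : Fin 6) : ℕ) = 2 := rfl
@[simp] lemma fv3 : ((3 : Fin 6) : ℕ) = 3 := rfl
@[simp] lemma fv4 : ((4 : Fin 6) : ℕ) = 4 := rfl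
@[simp] lemma fv5 : ((5 : Fin 6) : ℕ) = 5 := rfl

/-- `Pv v = v₀ + v₁X + ⋯ + v₅X⁵`. -/
def Pv (v : Fin 6 → k) : Polynomial k := ∑ i : Fin 6, C (v i) * X ^ (i : ℕ)

lemma gPoly_five : gPoly fc 5 = C (fc 6) := by
  simp [gPoly, Finset.sum_range_succ]

lemma X_mul_gPoly0 : X * gPoly fc 0 = sexticPoly fc - C (fc 0) := by
  simp only [gPoly, sexticPoly, Finset.sum_range_succ, Finset.sum_range_zero, fv0, fv1, fv2,
    fv3, fv4, fv5]
  norm_num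
  try ring

lemma X_mul_gPoly1 : X * gPoly fc 1 = gPoly fc 0 - C (fc 1) := by
  simp only [gPoly, Finset.sum_range_succ, Finset.sum_range_zero, fv0, fv1]
  norm_num
  try ring

lemma X_mul_gPoly2 : X * gPoly fc 2 = gPoly fc 1 - C (fc 2) := by
  simp only [gPoly, Finset.sum_range_succ, Finset.sum_range_zero, fv1, fv2]
  norm_num
  try ring

lemma X_mul_gPoly3 : X * gPoly fc 3 = gPoly fc 2 - C (fc 3) := by
  simp only [gPoly, Finset.sum_range_succ, Finset.sum_range_zero, fv2, fv3]
  norm_num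
  try ring

lemma X_mul_gPoly4 : X * gPoly fc 4 = gPoly fc 3 - C (fc 4) := by
  simp only [gPoly, Finset.sum_range_succ, Finset.sum_range_zero, fv3, fv4]
  norm_num
  try ring

lemma X_mul_gPoly5 : X * gPoly fc 5 = gPoly fc 4 - C (fc 5) := by
  simp only [gPoly, Finset.sum_range_succ, Finset.sum_range_zero, fv4, fv5]
  norm_num
  try ring

end
end TD
namespace TD
section L2
open Polynomial Matrix
variable {k : Type*} [Field k] (fc : ℕ → k)

lemma Rmat_mulVec (v : Fin 6 → k) : (Rmat fc).mulVec v =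
    ![-(fc 0 / fc 6 * v 5), v 0 - fc 1 / fc 6 * v 5, v 1 - fc 2 / fc 6 * v 5,
      v 2 - fc 3 / fc 6 * v 5, v 3 - fc 4 / fc 6 * v 5, v 4 - fc 5 / fc 6 * v 5] := by
  funext i
  fin_cases i <;>
    simp [Rmat, Matrix.mulVec, dotProduct, Fin.sum_univ_six, Matrix.cons_val_succ] <;> ring

lemma RmatT_mulVec (u : Fin 6 → k) : (Rmat fc)ᵀ.mulVec u =
    ![u 1, u 2, u 3, u 4, u 5,
      -(fc 0 / fc 6 * u 0 + fc 1 / fc 6 * u 1 + fc 2 / fc 6 * u 2 + fc 3 / fc 6 * u 3 +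
        fc 4 / fc 6 * u 4 + fc 5 / fc 6 * u 5)] := by
  funext i
  fin_cases i <;>
    simp [Rmat, Matrix.mulVec, dotProduct, Fin.sum_univ_six, Matrix.transpose_apply, Matrix.cons_val_succ] <;> ring

lemma Tmat_mulVec (hdeg : ∀ m, 7 ≤ m → fc m = 0) (w : Fin 6 → k) : (Tmat fc).mulVec w =
    ![fc 1 * w 0 + fc 2 * w 1 + fc 3 * w 2 + fc 4 * w 3 + fc 5 * w 4 + fc 6 * w 5,
      fc 2 * w 0 + fc 3 * w 1 + fc 4 * w 2 + fc 5 * w 3 + fc 6 * w 4,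
      fc 3 * w 0 + fc 4 * w 1 + fc 5 * w 2 + fc 6 * w 3,
      fc 4 * w 0 + fc 5 * w 1 + fc 6 * w 2,
      fc 5 * w 0 + fc 6 * w 1,
      fc 6 * w 0] := by
  have h7 : fc 7 = 0 := hdeg 7 (by norm_num)
  have h8 : fc 8 = 0 := hdeg 8 (by norm_num)
  have h9 : fc 9 = 0 := hdeg 9 (by norm_num)
  have h10 : fc 10 = 0 := hdeg 10 (by norm_num)
  have h11 : fc 11 = 0 := hdeg 11 (by norm_num)
  funext i
  fin_cases i <;>
    simp [Tmat, Matrix.mulVec, dotProduct, Fin.sum_univ_six, h7, h8, h9, h10, h11, Matrix.cons_val_succ] <;> ring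

end L2
end TD
namespace TD
section L3
open Polynomial Matrix
variable {k : Type*} [Field k] (fc : ℕ → k)

lemma Pv_smul (a : k) (v : Fin 6 → k) : Pv (a • v) = C a * Pv v := by
  simp only [Pv, Fin.sum_univ_six, Pi.smul_apply, smul_eq_mul, _root_.map_mul]
  ring

lemma Pv_add (u v : Fin 6 → k) : Pv (u + v) = Pv u + Pv v := by
  simp only [Pv, Fin.sum_univ_six, Pi.add_apply, map_add]
  ring

lemma xiPoly_smul (a : k) (v : Fin 6 → k) : xiPoly fc (a • v) = C a * xiPoly fc v := by
  simp only [xiPoly, Fin.sum_univ_six, Pi.smul_apply, smul_eq_mul, _root_.map_mul]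
  ring

lemma xiPoly_add (u v : Fin 6 → k) : xiPoly fc (u + v) = xiPoly fc u + xiPoly fc v := by
  simp only [xiPoly, Fin.sum_univ_six, Pi.add_apply, map_add]
  ring

lemma Xstep (hf6 : fc 6 ≠ 0) (u : Fin 6 → k) :
    xiPoly fc ((Rmat fc)ᵀ.mulVec u) = X * xiPoly fc u - C (u 0) * sexticPoly fc := by
  rw [RmatT_mulVec]
  have harg : C (-(fc 0 / fc 6 * u 0 + fc 1 / fc 6 * u 1 + fc 2 / fc 6 * u 2 +
        fc 3 / fc 6 * u 3 + fc 4 / fc 6 * u 4 + fc 5 / fc 6 * u 5)) * C (fc 6)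
      = C (-(fc 0 * u 0 + fc 1 * u 1 + fc 2 * u 2 + fc 3 * u 3 + fc 4 * u 4 + fc 5 * u 5)) := by
    rw [← _root_.map_mul]; congr 1; field_simp <;> ring
  simp only [xiPoly, Fin.sum_univ_six, vec6_at0, vec6_at1, vec6_at2, vec6_at3, vec6_at4,
    vec6_at5, mul_add, mul_left_comm X, X_mul_gPoly0, X_mul_gPoly1,
    X_mul_gPoly2, X_mul_gPoly3, X_mul_gPoly4, X_mul_gPoly5]
  rw [gPoly_five, harg]
  simp only [map_neg, map_add, _root_.map_mul]
  ring

lemma smul_Rmat_mulVec (hf6 : fc 6 ≠ 0) (v : Fin 6 → k) :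
    fc 6 • (Rmat fc).mulVec v =
      ![-(fc 0 * v 5), fc 6 * v 0 - fc 1 * v 5, fc 6 * v 1 - fc 2 * v 5,
        fc 6 * v 2 - fc 3 * v 5, fc 6 * v 3 - fc 4 * v 5, fc 6 * v 4 - fc 5 * v 5] := by
  rw [Rmat_mulVec]
  funext i
  fin_cases i <;>
    simp only [Fin.mk_zero, Fin.mk_one, Fin.reduceFinMk, Matrix.cons_val, Pi.smul_apply, smul_eq_mul, vec6_at0, vec6_at1, vec6_at2, vec6_at3, vec6_at4,
      vec6_at5] <;> (try field_simp) <;> (try ring)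

lemma Pstep6 (hf6 : fc 6 ≠ 0) (v : Fin 6 → k) :
    C (fc 6) * Pv ((Rmat fc).mulVec v) =
      C (fc 6) * (X * Pv v) - C (v 5) * sexticPoly fc := by
  rw [← Pv_smul, smul_Rmat_mulVec fc hf6]
  simp only [Pv, Fin.sum_univ_six, vec6_at0, vec6_at1, vec6_at2, vec6_at3, vec6_at4, vec6_at5,
    fv0, fv1, fv2, fv3, fv4, fv5, sexticPoly, Finset.sum_range_succ, Finset.sum_range_zero,
    map_neg, map_add, map_sub, _root_.map_mul]
  ring

end L3
end TD
namespace TD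
section L4
open Polynomial Matrix
variable {k : Type*} [Field k] (fc : ℕ → k)

lemma Pv_Tmat (hdeg : ∀ m, 7 ≤ m → fc m = 0) (w : Fin 6 → k) :
    Pv ((Tmat fc).mulVec w) = xiPoly fc w := by
  rw [Tmat_mulVec fc hdeg]
  simp only [Pv, xiPoly, gPoly, Fin.sum_univ_six, vec6_at0, vec6_at1, vec6_at2, vec6_at3,
    vec6_at4, vec6_at5, fv0, fv1, fv2, fv3, fv4, fv5, Finset.sum_range_succ,
    Finset.sum_range_zero, map_add, _root_.map_mul]
  ring

lemma Pv_coeff (v : Fin 6 → k) (i : Fin 6) : (Pv v).coeff (i : ℕ) = v i := by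
  fin_cases i <;>
    simp [Pv, Fin.sum_univ_six, coeff_C_mul, coeff_X_pow]

lemma Pv_eq_zero {v : Fin 6 → k} (h : Pv v = 0) : v = 0 := by
  funext i
  have := Pv_coeff v i
  rw [h, coeff_zero] at this
  exact this.symm

lemma Pv_natDegree_le (v : Fin 6 → k) : (Pv v).natDegree ≤ 5 := by
  rw [Polynomial.natDegree_le_iff_coeff_eq_zero]
  intro m hm
  simp only [Pv, Polynomial.finset_sum_coeff, Polynomial.coeff_C_mul, Polynomial.coeff_X_pow]
  apply Finset.sum_eq_zero
  intro i _
  rw [if_neg (by have := i.isLt; omega), mul_zero]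

lemma sextic_coeff (hdeg : ∀ m, 7 ≤ m → fc m = 0) (m : ℕ) :
    (sexticPoly fc).coeff m = fc m := by
  simp only [sexticPoly, Polynomial.finset_sum_coeff, Polynomial.coeff_C_mul,
    Polynomial.coeff_X_pow, mul_ite, mul_one, mul_zero]
  rw [Finset.sum_ite_eq (Finset.range 7) m fc]
  by_cases h : m ∈ Finset.range 7
  · simp [h]
  · rw [if_neg h]
    exact (hdeg m (by simpa [Finset.mem_range] using h)).symm

lemma sextic_ne_zero (hdeg : ∀ m, 7 ≤ m → fc m = 0) (hf6 : fc 6 ≠ 0) :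
    sexticPoly fc ≠ 0 := by
  intro h
  apply hf6
  rw [← sextic_coeff fc hdeg 6, h, Polynomial.coeff_zero]

lemma sextic_natDegree (hdeg : ∀ m, 7 ≤ m → fc m = 0) (hf6 : fc 6 ≠ 0) :
    (sexticPoly fc).natDegree = 6 := by
  apply le_antisymm
  · rw [Polynomial.natDegree_le_iff_coeff_eq_zero]
    intro m hm
    rw [sextic_coeff fc hdeg]
    exact hdeg m (by omega)
  · exact Polynomial.le_natDegree_of_ne_zero (by rw [sextic_coeff fc hdeg]; exact hf6)

lemma Pv_pow_step (hf6 : fc 6 ≠ 0) (v : Fin 6 → k) (j : ℕ) :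
    ∃ h : Polynomial k, C (fc 6) ^ j * Pv ((Rmat fc ^ j).mulVec v) =
      C (fc 6) ^ j * (X ^ j * Pv v) - h * sexticPoly fc := by
  induction j with
  | zero => exact ⟨0, by simp [Matrix.one_mulVec]⟩
  | succ n ih =>
    obtain ⟨h, hh⟩ := ih
    refine ⟨C (fc 6) * X * h + C (fc 6) ^ n * C ((Rmat fc ^ n).mulVec v 5), ?_⟩
    have hsplit : (Rmat fc ^ (n + 1)).mulVec v =
        (Rmat fc).mulVec ((Rmat fc ^ n).mulVec v) := by
      rw [pow_succ', ← Matrix.mulVec_mulVec]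
    rw [hsplit]
    linear_combination (C (fc 6) * X) * hh +
      C (fc 6) ^ n * Pstep6 fc hf6 ((Rmat fc ^ n).mulVec v)

end L4
end TD
namespace TD
section L5
open Polynomial Matrix
variable {k : Type*} [Field k] (fc : ℕ → k)

lemma CH_vec (hdeg : ∀ m, 7 ≤ m → fc m = 0) (hf6 : fc 6 ≠ 0) (v : Fin 6 → k) :
    ∑ j ∈ Finset.range 7, fc j • (Rmat fc ^ j).mulVec v = 0 := by
  set u := ∑ j ∈ Finset.range 7, fc j • (Rmat fc ^ j).mulVec v with hu
  obtain ⟨h0, e0⟩ := Pv_pow_step fc hf6 v 0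
  obtain ⟨h1, e1⟩ := Pv_pow_step fc hf6 v 1
  obtain ⟨h2, e2⟩ := Pv_pow_step fc hf6 v 2
  obtain ⟨h3, e3⟩ := Pv_pow_step fc hf6 v 3
  obtain ⟨h4, e4⟩ := Pv_pow_step fc hf6 v 4
  obtain ⟨h5, e5⟩ := Pv_pow_step fc hf6 v 5
  obtain ⟨h6, e6⟩ := Pv_pow_step fc hf6 v 6
  have hF : sexticPoly fc = C (fc 0) + C (fc 1) * X + C (fc 2) * X ^ 2 + C (fc 3) * X ^ 3 +
      C (fc 4) * X ^ 4 + C (fc 5) * X ^ 5 + C (fc 6) * X ^ 6 := by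
    simp only [sexticPoly, Finset.sum_range_succ, Finset.sum_range_zero]
    try ring
  have hPu : Pv u = C (fc 0) * Pv ((Rmat fc ^ 0).mulVec v) +
      C (fc 1) * Pv ((Rmat fc ^ 1).mulVec v) + C (fc 2) * Pv ((Rmat fc ^ 2).mulVec v) +
      C (fc 3) * Pv ((Rmat fc ^ 3).mulVec v) + C (fc 4) * Pv ((Rmat fc ^ 4).mulVec v) +
      C (fc 5) * Pv ((Rmat fc ^ 5).mulVec v) + C (fc 6) * Pv ((Rmat fc ^ 6).mulVec v) := by
    rw [hu]
    simp only [Finset.sum_range_succ, Finset.sum_range_zero, zero_add, Pv_add, Pv_smul]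
    try ring
  have key : C (fc 6) ^ 6 * Pv u = sexticPoly fc *
      (C (fc 6) ^ 6 * Pv v - (C (fc 0) * C (fc 6) ^ 6 * h0 + C (fc 1) * C (fc 6) ^ 5 * h1 +
        C (fc 2) * C (fc 6) ^ 4 * h2 + C (fc 3) * C (fc 6) ^ 3 * h3 +
        C (fc 4) * C (fc 6) ^ 2 * h4 + C (fc 5) * C (fc 6) ^ 1 * h5 +
        C (fc 6) * C (fc 6) ^ 0 * h6)) := by
    rw [hPu]
    linear_combination (C (fc 0) * C (fc 6) ^ 6) * e0 + (C (fc 1) * C (fc 6) ^ 5) * e1 +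
      (C (fc 2) * C (fc 6) ^ 4) * e2 + (C (fc 3) * C (fc 6) ^ 3) * e3 +
      (C (fc 4) * C (fc 6) ^ 2) * e4 + (C (fc 5) * C (fc 6) ^ 1) * e5 +
      (C (fc 6) * C (fc 6) ^ 0) * e6 - (C (fc 6) ^ 6 * Pv v) * hF
  have hzero : Pv ((fc 6 ^ 6) • u) = 0 := by
    rw [Pv_smul, map_pow]
    set H := C (fc 6) ^ 6 * Pv v - (C (fc 0) * C (fc 6) ^ 6 * h0 + C (fc 1) * C (fc 6) ^ 5 * h1 +
        C (fc 2) * C (fc 6) ^ 4 * h2 + C (fc 3) * C (fc 6) ^ 3 * h3 +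
        C (fc 4) * C (fc 6) ^ 2 * h4 + C (fc 5) * C (fc 6) ^ 1 * h5 +
        C (fc 6) * C (fc 6) ^ 0 * h6) with hH
    by_cases hH0 : H = 0
    · rw [key, hH0, mul_zero]
    · exfalso
      have hne : sexticPoly fc * H ≠ 0 :=
        mul_ne_zero (sextic_ne_zero fc hdeg hf6) hH0
      have hdeg1 : (sexticPoly fc * H).natDegree =
          (sexticPoly fc).natDegree + H.natDegree :=
        Polynomial.natDegree_mul (sextic_ne_zero fc hdeg hf6) hH0
      have hle : (C (fc 6) ^ 6 * Pv u).natDegree ≤ 5 := by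
        calc (C (fc 6) ^ 6 * Pv u).natDegree
            = ((C (fc 6 ^ 6) : Polynomial k) * Pv u).natDegree := by rw [map_pow]
          _ ≤ (Pv u).natDegree := Polynomial.natDegree_C_mul_le _ _
          _ ≤ 5 := Pv_natDegree_le u
      rw [key, hdeg1, sextic_natDegree fc hdeg hf6] at hle
      omega
  have : (fc 6 ^ 6) • u = 0 := Pv_eq_zero hzero
  have h6 : fc 6 ^ 6 ≠ 0 := pow_ne_zero _ hf6
  funext i
  have := congrFun this i
  simp only [Pi.smul_apply, smul_eq_mul, Pi.zero_apply] at this ⊢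
  exact (mul_eq_zero.mp this).resolve_left h6

end L5
end TD
namespace TD
section L6
open Polynomial Matrix
variable {k : Type*} [Field k] (fc : ℕ → k)

lemma TR_comm (hdeg : ∀ m, 7 ≤ m → fc m = 0) (hf6 : fc 6 ≠ 0) :
    Tmat fc * (Rmat fc)ᵀ = Rmat fc * Tmat fc := by
  have h7 : fc 7 = 0 := hdeg 7 (by norm_num)
  have h8 : fc 8 = 0 := hdeg 8 (by norm_num)
  have h9 : fc 9 = 0 := hdeg 9 (by norm_num)
  have h10 : fc 10 = 0 := hdeg 10 (by norm_num)
  have h11 : fc 11 = 0 := hdeg 11 (by norm_num)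
  ext i j
  fin_cases i <;> fin_cases j <;>
    simp [Matrix.mul_apply, Fin.sum_univ_six, Tmat, Rmat, Matrix.transpose_apply,
      h7, h8, h9, h10, h11] <;>
    (try field_simp) <;> (try ring) <;> (try tauto)

end L6
end TD
namespace TD
section L7
open Polynomial Matrix
variable {k : Type*} [Field k] (fc : ℕ → k)

/-- The key multiplication property for a coordinate vector `w`. -/
def Good (w : Fin 6 → k) : Prop :=
  ∀ y : Fin 6 → k,
    AdjoinRoot.mk (sexticPoly fc) (xiPoly fc y * xiPoly fc w) =
      AdjoinRoot.mk (sexticPoly fc)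
        (∑ j : Fin 6,
          C (y ⬝ᵥ (Rmat fc ^ (j : ℕ)).mulVec ((Tmat fc).mulVec w)) * gPoly fc j)

lemma good_add {u v : Fin 6 → k} (hu : Good fc u) (hv : Good fc v) : Good fc (u + v) := by
  intro y
  have hx : xiPoly fc y * xiPoly fc (u + v) =
      xiPoly fc y * xiPoly fc u + xiPoly fc y * xiPoly fc v := by
    rw [xiPoly_add]; ring
  have hs : (∑ j : Fin 6,
        C (y ⬝ᵥ (Rmat fc ^ (j : ℕ)).mulVec ((Tmat fc).mulVec (u + v))) * gPoly fc j) =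
      (∑ j : Fin 6, C (y ⬝ᵥ (Rmat fc ^ (j : ℕ)).mulVec ((Tmat fc).mulVec u)) * gPoly fc j) +
      (∑ j : Fin 6, C (y ⬝ᵥ (Rmat fc ^ (j : ℕ)).mulVec ((Tmat fc).mulVec v)) * gPoly fc j) := by
    rw [← Finset.sum_add_distrib]
    apply Finset.sum_congr rfl
    intro j _
    rw [Matrix.mulVec_add, Matrix.mulVec_add, dotProduct_add, map_add]
    ring
  rw [hx, hs, map_add, map_add, hu y, hv y]

lemma good_smul {u : Fin 6 → k} (a : k) (hu : Good fc u) : Good fc (a • u) := by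
  intro y
  have hx : xiPoly fc y * xiPoly fc (a • u) = C a * (xiPoly fc y * xiPoly fc u) := by
    rw [xiPoly_smul]; ring
  have hs : (∑ j : Fin 6,
        C (y ⬝ᵥ (Rmat fc ^ (j : ℕ)).mulVec ((Tmat fc).mulVec (a • u))) * gPoly fc j) =
      C a * ∑ j : Fin 6,
        C (y ⬝ᵥ (Rmat fc ^ (j : ℕ)).mulVec ((Tmat fc).mulVec u)) * gPoly fc j := by
    rw [Finset.mul_sum]
    apply Finset.sum_congr rfl
    intro j _
    rw [Matrix.mulVec_smul, Matrix.mulVec_smul, dotProduct_smul, smul_eq_mul, _root_.map_mul]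
    ring
  rw [hx, hs, _root_.map_mul, hu y]
  exact (_root_.map_mul _ _ _).symm

end L7
end TD
namespace TD
section L8
open Polynomial Matrix
variable {k : Type*} [Field k] (fc : ℕ → k)

lemma pow_mulVec_step (n : ℕ) (x : Fin 6 → k) :
    (Rmat fc ^ (n + 1)).mulVec x = (Rmat fc).mulVec ((Rmat fc ^ n).mulVec x) := by
  rw [pow_succ', ← Matrix.mulVec_mulVec]

lemma good_e5 (hdeg : ∀ m, 7 ≤ m → fc m = 0) (hf6 : fc 6 ≠ 0) :
    Good fc ![0, 0, 0, 0, 0, 1] := by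
  intro y
  have ht : (Tmat fc).mulVec ![0, 0, 0, 0, 0, 1] = ![fc 6, 0, 0, 0, 0, 0] := by
    rw [Tmat_mulVec fc hdeg]; funext i; fin_cases i <;> simp
  have h0 : (Rmat fc ^ 0).mulVec ![fc 6, 0, 0, 0, 0, 0] = ![fc 6, 0, 0, 0, 0, 0] := by
    simp [Matrix.one_mulVec]
  have h1 : (Rmat fc ^ 1).mulVec ![fc 6, 0, 0, 0, 0, 0] = ![0, fc 6, 0, 0, 0, 0] := by
    rw [pow_one, Rmat_mulVec]
    funext i; fin_cases i <;> simp
  have h2 : (Rmat fc ^ 2).mulVec ![fc 6, 0, 0, 0, 0, 0] = ![0, 0, fc 6, 0, 0, 0] := by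
    rw [pow_succ', ← Matrix.mulVec_mulVec, h1, Rmat_mulVec]
    funext i; fin_cases i <;> simp
  have h3 : (Rmat fc ^ 3).mulVec ![fc 6, 0, 0, 0, 0, 0] = ![0, 0, 0, fc 6, 0, 0] := by
    rw [pow_succ', ← Matrix.mulVec_mulVec, h2, Rmat_mulVec]
    funext i; fin_cases i <;> simp
  have h4 : (Rmat fc ^ 4).mulVec ![fc 6, 0, 0, 0, 0, 0] = ![0, 0, 0, 0, fc 6, 0] := by
    rw [pow_succ', ← Matrix.mulVec_mulVec, h3, Rmat_mulVec]
    funext i; fin_cases i <;> simp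
  have h5 : (Rmat fc ^ 5).mulVec ![fc 6, 0, 0, 0, 0, 0] = ![0, 0, 0, 0, 0, fc 6] := by
    rw [pow_succ', ← Matrix.mulVec_mulVec, h4, Rmat_mulVec]
    funext i; fin_cases i <;> simp
  apply congrArg
  simp only [Fin.sum_univ_six, fv0, fv1, fv2, fv3, fv4, fv5, ht, h0, h1, h2, h3, h4, h5]
  simp only [xiPoly, Fin.sum_univ_six, vec6_at0, vec6_at1, vec6_at2, vec6_at3, vec6_at4,
    vec6_at5, gPoly_five, dotProduct, C_0, C_1, zero_mul, mul_zero, add_zero,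
    zero_add, one_mul, mul_one]
  simp only [C_mul]
  ring

end L8
end TD
namespace TD
section L9
open Polynomial Matrix
variable {k : Type*} [Field k] (fc : ℕ → k)

lemma good_step (hdeg : ∀ m, 7 ≤ m → fc m = 0) (hf6 : fc 6 ≠ 0) {w : Fin 6 → k}
    (hw : Good fc w) : Good fc ((Rmat fc)ᵀ.mulVec w) := by
  intro y
  have hcomm : (Tmat fc).mulVec ((Rmat fc)ᵀ.mulVec w) =
      (Rmat fc).mulVec ((Tmat fc).mulVec w) := by
    rw [Matrix.mulVec_mulVec, Matrix.mulVec_mulVec, TR_comm fc hdeg hf6]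
  have hc : ∀ j : ℕ, (Rmat fc ^ j).mulVec ((Tmat fc).mulVec ((Rmat fc)ᵀ.mulVec w)) =
      (Rmat fc ^ (j + 1)).mulVec ((Tmat fc).mulVec w) := by
    intro j
    rw [hcomm, Matrix.mulVec_mulVec, ← pow_succ]
  have hch := CH_vec fc hdeg hf6 ((Tmat fc).mulVec w)
  have hdot := congrArg (fun z => y ⬝ᵥ z) hch
  simp only [Finset.sum_range_succ, Finset.sum_range_zero, zero_add, dotProduct_add,
    dotProduct_smul, smul_eq_mul, dotProduct_zero] at hdot
  set t := (Tmat fc).mulVec w with ht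
  have hkey : (y ⬝ᵥ (Rmat fc ^ 6).mulVec t) * fc 6 =
      -(fc 0 * (y ⬝ᵥ (Rmat fc ^ 0).mulVec t) + fc 1 * (y ⬝ᵥ (Rmat fc ^ 1).mulVec t) + fc 2 * (y ⬝ᵥ (Rmat fc ^ 2).mulVec t) + fc 3 * (y ⬝ᵥ (Rmat fc ^ 3).mulVec t) + fc 4 * (y ⬝ᵥ (Rmat fc ^ 4).mulVec t) + fc 5 * (y ⬝ᵥ (Rmat fc ^ 5).mulVec t)) := by
    linear_combination hdot
  have hX : X * (C (y ⬝ᵥ (Rmat fc ^ 0).mulVec t) * gPoly fc 0 + C (y ⬝ᵥ (Rmat fc ^ 1).mulVec t) * gPoly fc 1 + C (y ⬝ᵥ (Rmat fc ^ 2).mulVec t) * gPoly fc 2 + C (y ⬝ᵥ (Rmat fc ^ 3).mulVec t) * gPoly fc 3 + C (y ⬝ᵥ (Rmat fc ^ 4).mulVec t) * gPoly fc 4 + C (y ⬝ᵥ (Rmat fc ^ 5).mulVec t) * gPoly fc 5) =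
      C (y ⬝ᵥ (Rmat fc ^ 0).mulVec t) * sexticPoly fc + (C (y ⬝ᵥ (Rmat fc ^ 1).mulVec t) * gPoly fc 0 + C (y ⬝ᵥ (Rmat fc ^ 2).mulVec t) * gPoly fc 1 + C (y ⬝ᵥ (Rmat fc ^ 3).mulVec t) * gPoly fc 2 + C (y ⬝ᵥ (Rmat fc ^ 4).mulVec t) * gPoly fc 3 + C (y ⬝ᵥ (Rmat fc ^ 5).mulVec t) * gPoly fc 4 + C (y ⬝ᵥ (Rmat fc ^ 6).mulVec t) * gPoly fc 5) := by
    simp only [mul_add, mul_left_comm X, X_mul_gPoly0, X_mul_gPoly1, X_mul_gPoly2,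
      X_mul_gPoly3, X_mul_gPoly4, X_mul_gPoly5]
    rw [gPoly_five, ← _root_.map_mul C (y ⬝ᵥ (Rmat fc ^ 6).mulVec t) (fc 6), hkey]
    simp only [map_neg, map_add, C_mul]
    ring
  rw [Xstep fc hf6 w]
  have hL : xiPoly fc y * (X * xiPoly fc w - C (w 0) * sexticPoly fc) =
      X * (xiPoly fc y * xiPoly fc w) - C (w 0) * xiPoly fc y * sexticPoly fc := by ring
  rw [hL, map_sub, _root_.map_mul,
    _root_.map_mul (AdjoinRoot.mk (sexticPoly fc)) (C (w 0) * xiPoly fc y) (sexticPoly fc),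
    AdjoinRoot.mk_self, mul_zero, sub_zero,
    hw y, ← ht, ← _root_.map_mul]
  simp only [Fin.sum_univ_six, fv0, fv1, fv2, fv3, fv4, fv5]
  rw [hc 0, hc 1, hc 2, hc 3, hc 4, hc 5]
  simp only [Nat.reduceAdd, pow_zero, Matrix.one_mulVec]
  have hX' := hX
  simp only [pow_zero, Matrix.one_mulVec] at hX'
  rw [hX', map_add, _root_.map_mul, AdjoinRoot.mk_self, mul_zero, zero_add]

end L9
end TD
namespace TD
section L10
open Polynomial Matrix
variable {k : Type*} [Field k] (fc : ℕ → k)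

lemma good_b5 (hdeg : ∀ m, 7 ≤ m → fc m = 0) (hf6 : fc 6 ≠ 0) : Good fc ![0, 0, 0, 0, 0, 1] :=
  good_e5 fc hdeg hf6

lemma good_b4 (hdeg : ∀ m, 7 ≤ m → fc m = 0) (hf6 : fc 6 ≠ 0) : Good fc ![0, 0, 0, 0, 1, 0] := by
  have h := good_add fc (good_step fc hdeg hf6 (good_b5 fc hdeg hf6))
    (good_smul fc (fc 5 / fc 6) (good_b5 fc hdeg hf6))
  have hv : ![0, 0, 0, 0, 1, 0] = ((Rmat fc)ᵀ.mulVec ![0, 0, 0, 0, 0, 1]) + (fc 5 / fc 6) • ![0, 0, 0, 0, 0, 1] := by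
    rw [RmatT_mulVec]
    funext i
    fin_cases i <;> simp
  rw [hv]
  exact h

lemma good_b3 (hdeg : ∀ m, 7 ≤ m → fc m = 0) (hf6 : fc 6 ≠ 0) : Good fc ![0, 0, 0, 1, 0, 0] := by
  have h := good_add fc (good_step fc hdeg hf6 (good_b4 fc hdeg hf6))
    (good_smul fc (fc 4 / fc 6) (good_b5 fc hdeg hf6))
  have hv : ![0, 0, 0, 1, 0, 0] = ((Rmat fc)ᵀ.mulVec ![0, 0, 0, 0, 1, 0]) + (fc 4 / fc 6) • ![0, 0, 0, 0, 0, 1] := by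
    rw [RmatT_mulVec]
    funext i
    fin_cases i <;> simp
  rw [hv]
  exact h

lemma good_b2 (hdeg : ∀ m, 7 ≤ m → fc m = 0) (hf6 : fc 6 ≠ 0) : Good fc ![0, 0, 1, 0, 0, 0] := by
  have h := good_add fc (good_step fc hdeg hf6 (good_b3 fc hdeg hf6))
    (good_smul fc (fc 3 / fc 6) (good_b5 fc hdeg hf6))
  have hv : ![0, 0, 1, 0, 0, 0] = ((Rmat fc)ᵀ.mulVec ![0, 0, 0, 1, 0, 0]) + (fc 3 / fc 6) • ![0, 0, 0, 0, 0, 1] := by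
    rw [RmatT_mulVec]
    funext i
    fin_cases i <;> simp
  rw [hv]
  exact h

lemma good_b1 (hdeg : ∀ m, 7 ≤ m → fc m = 0) (hf6 : fc 6 ≠ 0) : Good fc ![0, 1, 0, 0, 0, 0] := by
  have h := good_add fc (good_step fc hdeg hf6 (good_b2 fc hdeg hf6))
    (good_smul fc (fc 2 / fc 6) (good_b5 fc hdeg hf6))
  have hv : ![0, 1, 0, 0, 0, 0] = ((Rmat fc)ᵀ.mulVec ![0, 0, 1, 0, 0, 0]) + (fc 2 / fc 6) • ![0, 0, 0, 0, 0, 1] := by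
    rw [RmatT_mulVec]
    funext i
    fin_cases i <;> simp
  rw [hv]
  exact h

lemma good_b0 (hdeg : ∀ m, 7 ≤ m → fc m = 0) (hf6 : fc 6 ≠ 0) : Good fc ![1, 0, 0, 0, 0, 0] := by
  have h := good_add fc (good_step fc hdeg hf6 (good_b1 fc hdeg hf6))
    (good_smul fc (fc 1 / fc 6) (good_b5 fc hdeg hf6))
  have hv : ![1, 0, 0, 0, 0, 0] = ((Rmat fc)ᵀ.mulVec ![0, 1, 0, 0, 0, 0]) + (fc 1 / fc 6) • ![0, 0, 0, 0, 0, 1] := by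
    rw [RmatT_mulVec]
    funext i
    fin_cases i <;> simp
  rw [hv]
  exact h

lemma good_all (hdeg : ∀ m, 7 ≤ m → fc m = 0) (hf6 : fc 6 ≠ 0) (w : Fin 6 → k) :
    Good fc w := by
  have hv : w = w 0 • ![1, 0, 0, 0, 0, 0] + w 1 • ![0, 1, 0, 0, 0, 0] + w 2 • ![0, 0, 1, 0, 0, 0] +
      w 3 • ![0, 0, 0, 1, 0, 0] + w 4 • ![0, 0, 0, 0, 1, 0] + w 5 • ![0, 0, 0, 0, 0, 1] := by
    funext i
    fin_cases i <;> simp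
  rw [hv]
  exact good_add fc (good_add fc (good_add fc (good_add fc (good_add fc
    (good_smul fc (w 0) (good_b0 fc hdeg hf6)) (good_smul fc (w 1) (good_b1 fc hdeg hf6)))
    (good_smul fc (w 2) (good_b2 fc hdeg hf6))) (good_smul fc (w 3) (good_b3 fc hdeg hf6)))
    (good_smul fc (w 4) (good_b4 fc hdeg hf6))) (good_smul fc (w 5) (good_b5 fc hdeg hf6))

end L10
end TD
namespace TD
section L11
open Polynomial Matrix
variable {k : Type*} [Field k] (fc : ℕ → k)

lemma Qform_eq (d : Fin 6 → k) (w : Fin 6 → k) (j : ℕ) :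
    Qform fc d j w = fc 6 *
      ((d 0 • (((Rmat fc)ᵀ ^ 0) *ᵥ w) + d 1 • (((Rmat fc)ᵀ ^ 1) *ᵥ w) + d 2 • (((Rmat fc)ᵀ ^ 2) *ᵥ w) + d 3 • (((Rmat fc)ᵀ ^ 3) *ᵥ w) + d 4 • (((Rmat fc)ᵀ ^ 4) *ᵥ w) + d 5 • (((Rmat fc)ᵀ ^ 5) *ᵥ w)) ⬝ᵥ ((Rmat fc ^ j) *ᵥ ((Tmat fc) *ᵥ w))) := by
  have hterm : ∀ i : ℕ, w ⬝ᵥ ((Rmat fc ^ (i + j) * Tmat fc) *ᵥ w) =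
      (((Rmat fc)ᵀ ^ i) *ᵥ w) ⬝ᵥ ((Rmat fc ^ j) *ᵥ ((Tmat fc) *ᵥ w)) := by
    intro i
    rw [pow_add, mul_assoc, ← Matrix.mulVec_mulVec, ← Matrix.mulVec_mulVec,
      dotProduct_mulVec, ← Matrix.mulVec_transpose, Matrix.transpose_pow]
  rw [Qform, Qmat]
  simp only [Fin.sum_univ_six, fv0, fv1, fv2, fv3, fv4, fv5]
  simp only [Matrix.add_mulVec, Matrix.smul_mulVec, dotProduct_add, dotProduct_smul,
    smul_eq_mul]
  rw [hterm 0, hterm 1, hterm 2, hterm 3, hterm 4, hterm 5]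
  simp only [add_dotProduct, smul_dotProduct, smul_eq_mul]
  ring

lemma xi_pow (hf6 : fc 6 ≠ 0) (w : Fin 6 → k) (i : ℕ) :
    ∃ h : Polynomial k, xiPoly fc (((Rmat fc)ᵀ ^ i) *ᵥ w) =
      X ^ i * xiPoly fc w - h * sexticPoly fc := by
  induction i with
  | zero => exact ⟨0, by simp [Matrix.one_mulVec]⟩
  | succ n ih =>
    obtain ⟨h, hh⟩ := ih
    refine ⟨X * h + C ((((Rmat fc)ᵀ ^ n) *ᵥ w) 0), ?_⟩
    have hs : ((Rmat fc)ᵀ ^ (n + 1)) *ᵥ w = (Rmat fc)ᵀ *ᵥ (((Rmat fc)ᵀ ^ n) *ᵥ w) := by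
      rw [pow_succ', ← Matrix.mulVec_mulVec]
    rw [hs, Xstep fc hf6, hh]
    ring

lemma delta_mk (hf6 : fc 6 ≠ 0) (d : Fin 6 → k) (w : Fin 6 → k) :
    AdjoinRoot.mk (sexticPoly fc) (xiPoly fc (d 0 • (((Rmat fc)ᵀ ^ 0) *ᵥ w) + d 1 • (((Rmat fc)ᵀ ^ 1) *ᵥ w) + d 2 • (((Rmat fc)ᵀ ^ 2) *ᵥ w) + d 3 • (((Rmat fc)ᵀ ^ 3) *ᵥ w) + d 4 • (((Rmat fc)ᵀ ^ 4) *ᵥ w) + d 5 • (((Rmat fc)ᵀ ^ 5) *ᵥ w))) =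
      AdjoinRoot.mk (sexticPoly fc) (deltaPoly d * xiPoly fc w) := by
  obtain ⟨h0, e0⟩ := xi_pow fc hf6 w 0
  obtain ⟨h1, e1⟩ := xi_pow fc hf6 w 1
  obtain ⟨h2, e2⟩ := xi_pow fc hf6 w 2
  obtain ⟨h3, e3⟩ := xi_pow fc hf6 w 3
  obtain ⟨h4, e4⟩ := xi_pow fc hf6 w 4
  obtain ⟨h5, e5⟩ := xi_pow fc hf6 w 5
  have hδ : deltaPoly d = C (d 0) + C (d 1) * X + C (d 2) * X ^ 2 + C (d 3) * X ^ 3 +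
      C (d 4) * X ^ 4 + C (d 5) * X ^ 5 := by
    simp only [deltaPoly, Fin.sum_univ_six, fv0, fv1, fv2, fv3, fv4, fv5]
    ring
  have hpoly : xiPoly fc (d 0 • (((Rmat fc)ᵀ ^ 0) *ᵥ w) + d 1 • (((Rmat fc)ᵀ ^ 1) *ᵥ w) + d 2 • (((Rmat fc)ᵀ ^ 2) *ᵥ w) + d 3 • (((Rmat fc)ᵀ ^ 3) *ᵥ w) + d 4 • (((Rmat fc)ᵀ ^ 4) *ᵥ w) + d 5 • (((Rmat fc)ᵀ ^ 5) *ᵥ w)) = deltaPoly d * xiPoly fc w -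
      (C (d 0) * h0 + C (d 1) * h1 + C (d 2) * h2 + C (d 3) * h3 + C (d 4) * h4 +
        C (d 5) * h5) * sexticPoly fc := by
    simp only [xiPoly_add, xiPoly_smul]
    rw [e0, e1, e2, e3, e4, e5, hδ]
    ring
  rw [hpoly, map_sub,
    _root_.map_mul (AdjoinRoot.mk (sexticPoly fc))
      (C (d 0) * h0 + C (d 1) * h1 + C (d 2) * h2 + C (d 3) * h3 + C (d 4) * h4 + C (d 5) * h5)
      (sexticPoly fc),
    AdjoinRoot.mk_self, mul_zero, sub_zero]

lemma gPoly3_eval (α : k) : (gPoly fc 3).eval α = fc 4 + fc 5 * α + fc 6 * α ^ 2 := by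
  simp [gPoly, Finset.sum_range_succ]
  try ring

lemma gPoly4_eval (α : k) : (gPoly fc 4).eval α = fc 5 + fc 6 * α := by
  simp [gPoly, Finset.sum_range_succ]

end L11
end TD

open TD

/-- Explicit formula underlying the twisted duplication map: if `f(α) = 0`, `ξ` (with
coordinate vector `w` in the basis `g₁, …, g₆`) satisfies
`Q₀^{(δ)}(ξ) = Q₁^{(δ)}(ξ) = Q₂^{(δ)}(ξ) = 0` and `ξ(α) = 0`, then in `L` one has
`f₆·δ·ξ² = (X − α)·(f₆Q₃^{(δ)}(ξ)·X + (f₅ + f₆α)Q₃^{(δ)}(ξ) + f₆Q₄^{(δ)}(ξ))`. -/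
theorem twisted_duplication_formula {k : Type*} [Field k] (fc : ℕ → k)
    (hdeg : ∀ m, 7 ≤ m → fc m = 0) (hf6 : fc 6 ≠ 0)
    (α : k) (hα : (sexticPoly fc).eval α = 0)
    (d : Fin 6 → k) (w : Fin 6 → k)
    (hQ0 : Qform fc d 0 w = 0) (hQ1 : Qform fc d 1 w = 0) (hQ2 : Qform fc d 2 w = 0)
    (hξα : (xiPoly fc w).eval α = 0) :
    AdjoinRoot.mk (sexticPoly fc) (C (fc 6) * deltaPoly d * xiPoly fc w ^ 2) =
      AdjoinRoot.mk (sexticPoly fc) ((X - C α) *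
        (C (fc 6 * Qform fc d 3 w) * X +
          C ((fc 5 + fc 6 * α) * Qform fc d 3 w + fc 6 * Qform fc d 4 w))) := by
  have h1 : C (fc 6) * deltaPoly d * xiPoly fc w ^ 2 =
      C (fc 6) * ((deltaPoly d * xiPoly fc w) * xiPoly fc w) := by ring
  have hy := delta_mk fc hf6 d w
  have hmaster := good_all fc hdeg hf6 w (d 0 • (((Rmat fc)ᵀ ^ 0) *ᵥ w) + d 1 • (((Rmat fc)ᵀ ^ 1) *ᵥ w) + d 2 • (((Rmat fc)ᵀ ^ 2) *ᵥ w) + d 3 • (((Rmat fc)ᵀ ^ 3) *ᵥ w) + d 4 • (((Rmat fc)ᵀ ^ 4) *ᵥ w) + d 5 • (((Rmat fc)ᵀ ^ 5) *ᵥ w))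
  have hsum : C (fc 6) * (∑ j : Fin 6, C ((d 0 • (((Rmat fc)ᵀ ^ 0) *ᵥ w) + d 1 • (((Rmat fc)ᵀ ^ 1) *ᵥ w) + d 2 • (((Rmat fc)ᵀ ^ 2) *ᵥ w) + d 3 • (((Rmat fc)ᵀ ^ 3) *ᵥ w) + d 4 • (((Rmat fc)ᵀ ^ 4) *ᵥ w) + d 5 • (((Rmat fc)ᵀ ^ 5) *ᵥ w)) ⬝ᵥ (Rmat fc ^ (j : ℕ)).mulVec ((Tmat fc).mulVec w)) * gPoly fc j) = C (Qform fc d 0 w) * gPoly fc 0 + C (Qform fc d 1 w) * gPoly fc 1 + C (Qform fc d 2 w) * gPoly fc 2 + C (Qform fc d 3 w) * gPoly fc 3 + C (Qform fc d 4 w) * gPoly fc 4 + C (Qform fc d 5 w) * gPoly fc 5 := by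
    simp only [Fin.sum_univ_six, fv0, fv1, fv2, fv3, fv4, fv5, mul_add, ← mul_assoc,
      ← C_mul]
    rw [← Qform_eq fc d w 0, ← Qform_eq fc d w 1, ← Qform_eq fc d w 2, ← Qform_eq fc d w 3,
      ← Qform_eq fc d w 4, ← Qform_eq fc d w 5]
  have hchain : AdjoinRoot.mk (sexticPoly fc) (C (fc 6) * deltaPoly d * xiPoly fc w ^ 2) =
      AdjoinRoot.mk (sexticPoly fc) (C (Qform fc d 0 w) * gPoly fc 0 + C (Qform fc d 1 w) * gPoly fc 1 + C (Qform fc d 2 w) * gPoly fc 2 + C (Qform fc d 3 w) * gPoly fc 3 + C (Qform fc d 4 w) * gPoly fc 4 + C (Qform fc d 5 w) * gPoly fc 5) := by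
    calc AdjoinRoot.mk (sexticPoly fc) (C (fc 6) * deltaPoly d * xiPoly fc w ^ 2)
        = AdjoinRoot.mk (sexticPoly fc) (C (fc 6)) * (AdjoinRoot.mk (sexticPoly fc) (deltaPoly d * xiPoly fc w) * AdjoinRoot.mk (sexticPoly fc) (xiPoly fc w)) := by
          rw [h1, _root_.map_mul, _root_.map_mul]
      _ = AdjoinRoot.mk (sexticPoly fc) (C (fc 6)) * (AdjoinRoot.mk (sexticPoly fc) (xiPoly fc (d 0 • (((Rmat fc)ᵀ ^ 0) *ᵥ w) + d 1 • (((Rmat fc)ᵀ ^ 1) *ᵥ w) + d 2 • (((Rmat fc)ᵀ ^ 2) *ᵥ w) + d 3 • (((Rmat fc)ᵀ ^ 3) *ᵥ w) + d 4 • (((Rmat fc)ᵀ ^ 4) *ᵥ w) + d 5 • (((Rmat fc)ᵀ ^ 5) *ᵥ w))) * AdjoinRoot.mk (sexticPoly fc) (xiPoly fc w)) := by rw [hy]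
      _ = AdjoinRoot.mk (sexticPoly fc) (C (fc 6)) * AdjoinRoot.mk (sexticPoly fc) (xiPoly fc (d 0 • (((Rmat fc)ᵀ ^ 0) *ᵥ w) + d 1 • (((Rmat fc)ᵀ ^ 1) *ᵥ w) + d 2 • (((Rmat fc)ᵀ ^ 2) *ᵥ w) + d 3 • (((Rmat fc)ᵀ ^ 3) *ᵥ w) + d 4 • (((Rmat fc)ᵀ ^ 4) *ᵥ w) + d 5 • (((Rmat fc)ᵀ ^ 5) *ᵥ w)) * xiPoly fc w) := by rw [_root_.map_mul]
      _ = AdjoinRoot.mk (sexticPoly fc) (C (fc 6)) * AdjoinRoot.mk (sexticPoly fc) (∑ j : Fin 6, C ((d 0 • (((Rmat fc)ᵀ ^ 0) *ᵥ w) + d 1 • (((Rmat fc)ᵀ ^ 1) *ᵥ w) + d 2 • (((Rmat fc)ᵀ ^ 2) *ᵥ w) + d 3 • (((Rmat fc)ᵀ ^ 3) *ᵥ w) + d 4 • (((Rmat fc)ᵀ ^ 4) *ᵥ w) + d 5 • (((Rmat fc)ᵀ ^ 5) *ᵥ w)) ⬝ᵥ (Rmat fc ^ (j : ℕ)).mulVec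 ((Tmat fc).mulVec w)) * gPoly fc j) := by rw [hmaster]
      _ = AdjoinRoot.mk (sexticPoly fc) (C (fc 6) * (∑ j : Fin 6, C ((d 0 • (((Rmat fc)ᵀ ^ 0) *ᵥ w) + d 1 • (((Rmat fc)ᵀ ^ 1) *ᵥ w) + d 2 • (((Rmat fc)ᵀ ^ 2) *ᵥ w) + d 3 • (((Rmat fc)ᵀ ^ 3) *ᵥ w) + d 4 • (((Rmat fc)ᵀ ^ 4) *ᵥ w) + d 5 • (((Rmat fc)ᵀ ^ 5) *ᵥ w)) ⬝ᵥ (Rmat fc ^ (j : ℕ)).mulVec ((Tmat fc).mulVec w)) * gPoly fc j)) := by rw [_root_.map_mul]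
      _ = AdjoinRoot.mk (sexticPoly fc) (C (Qform fc d 0 w) * gPoly fc 0 + C (Qform fc d 1 w) * gPoly fc 1 + C (Qform fc d 2 w) * gPoly fc 2 + C (Qform fc d 3 w) * gPoly fc 3 + C (Qform fc d 4 w) * gPoly fc 4 + C (Qform fc d 5 w) * gPoly fc 5) := by rw [hsum]
  simp only [hQ0, hQ1, hQ2, C_0, zero_mul, zero_add] at hchain
  have hα' : (sexticPoly fc).eval₂ (RingHom.id k) α = 0 := hα
  have heq := congrArg (AdjoinRoot.lift (RingHom.id k) α hα') hchain
  simp only [AdjoinRoot.lift_mk] at heq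
  have hid : ∀ p : Polynomial k, p.eval₂ (RingHom.id k) α = p.eval α := fun p => rfl
  rw [hid, hid] at heq
  rw [gPoly_five] at heq
  simp only [eval_mul, eval_add, eval_pow, eval_C, hξα, pow_two, mul_zero, zero_mul,
    gPoly3_eval, gPoly4_eval] at heq
  have hval : Qform fc d 5 w * fc 6 =
      -(Qform fc d 3 w * (fc 4 + fc 5 * α + fc 6 * α ^ 2) +
        Qform fc d 4 w * (fc 5 + fc 6 * α)) := by
    linear_combination -heq
  rw [hchain]
  apply congrArg
  have hg3 : gPoly fc 3 = C (fc 4) + C (fc 5) * X + C (fc 6) * X ^ 2 := by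
    simp only [gPoly, Finset.sum_range_succ, Finset.sum_range_zero, fv3]
    norm_num
    try ring
  have hg4 : gPoly fc 4 = C (fc 5) + C (fc 6) * X := by
    simp only [gPoly, Finset.sum_range_succ, Finset.sum_range_zero, fv4]
    norm_num
    try ring
  rw [gPoly_five, ← _root_.map_mul C (Qform fc d 5 w) (fc 6), hval, hg3, hg4]
  simp only [map_neg, map_add, C_mul, map_pow]
  ring
end

section
/- Suppose f(α) = 0 and f(ω) = 0 with α, ω ∈ k and ω ≠ α, and suppose δ ∈ L satisfies δ(ω) ≠ 0. Let ξ ∈ L satisfy Q₀^{(δ)}(ξ) = Q₁^{(δ)}(ξ) = Q₂^{(δ)}(ξ) = 0 and ξ(α) = 0. Then ξ(ω) = 0 if and only if f₆Q₃^{(δ)}(ξ)·ω + (f₅ + f₆α)Q₃^{(δ)}(ξ) + f₆Q₄^{(δ)}(ξ) = 0. (This is the algebraic content of the statement that the fiber of the twisted duplication map π̄_δ : Z_δ → P¹ over a root ω ≠ α of f is the hyperplane section Z_δ ∩ P(ker ev_ω).) -/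
open Polynomial Matrix

namespace FiberDup

open Polynomial Matrix

variable {k : Type*} [Field k] (fc : ℕ → k)

theorem gPoly5 : gPoly fc 5 = C (fc 6) := by
  have e5 : ((5 : Fin 6) : ℕ) = 5 := rfl
  norm_num [gPoly, e5, Finset.sum_range_succ]

theorem xiPoly_vsum (c : Fin 6 → k) (y : Fin 6 → Fin 6 → k) :
    xiPoly fc (∑ m : Fin 6, c m • y m) = ∑ m : Fin 6, C (c m) * xiPoly fc (y m) := by
  simp only [xiPoly, Finset.sum_apply, Pi.smul_apply, smul_eq_mul, map_sum, C_mul,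
    Finset.sum_mul, Finset.mul_sum]
  rw [Finset.sum_comm]
  simp [mul_assoc]

theorem xiPoly_smul (c : k) (u : Fin 6 → k) : xiPoly fc (c • u) = C c * xiPoly fc u := by
  simp [xiPoly, Finset.mul_sum, mul_assoc, C_mul]

theorem xiPoly_eq_coeff (hdeg : ∀ m, 7 ≤ m → fc m = 0) (u : Fin 6 → k) :
    xiPoly fc u = ∑ m : Fin 6, C ((Tmat fc).mulVec u m) * X ^ (m : ℕ) := by
  have h7 := hdeg 7 (by norm_num); have h8 := hdeg 8 (by norm_num)
  have h9 := hdeg 9 (by norm_num); have h10 := hdeg 10 (by norm_num)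
  have h11 := hdeg 11 (by norm_num)
  have e0 : ((0 : Fin 6) : ℕ) = 0 := rfl
  have e1 : ((1 : Fin 6) : ℕ) = 1 := rfl
  have e2 : ((2 : Fin 6) : ℕ) = 2 := rfl
  have e3 : ((3 : Fin 6) : ℕ) = 3 := rfl
  have e4 : ((4 : Fin 6) : ℕ) = 4 := rfl
  have e5 : ((5 : Fin 6) : ℕ) = 5 := rfl
  simp only [xiPoly, gPoly, Tmat, mulVec, dotProduct, Fin.sum_univ_six, e0, e1, e2, e3, e4, e5,
    Matrix.of_apply]
  norm_num [Finset.sum_range_succ, h7, h8, h9, h10, h11]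
  ring

theorem mulX (hf6 : fc 6 ≠ 0) (v : Fin 6 → k) :
    X * xiPoly fc v = C (v 0) * sexticPoly fc + xiPoly fc ((Rmat fc)ᵀ.mulVec v) := by
  have e0 : ((0 : Fin 6) : ℕ) = 0 := rfl
  have e1 : ((1 : Fin 6) : ℕ) = 1 := rfl
  have e2 : ((2 : Fin 6) : ℕ) = 2 := rfl
  have e3 : ((3 : Fin 6) : ℕ) = 3 := rfl
  have e4 : ((4 : Fin 6) : ℕ) = 4 := rfl
  have e5 : ((5 : Fin 6) : ℕ) = 5 := rfl
  have hm0 : (Rmat fc)ᵀ.mulVec v 0 = v 1 := by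
    norm_num [Rmat, mulVec, dotProduct, Fin.sum_univ_six, e0, e1, e2, e3, e4, e5]
  have hm1 : (Rmat fc)ᵀ.mulVec v 1 = v 2 := by
    norm_num [Rmat, mulVec, dotProduct, Fin.sum_univ_six, e0, e1, e2, e3, e4, e5]
  have hm2 : (Rmat fc)ᵀ.mulVec v 2 = v 3 := by
    norm_num [Rmat, mulVec, dotProduct, Fin.sum_univ_six, e0, e1, e2, e3, e4, e5]
  have hm3 : (Rmat fc)ᵀ.mulVec v 3 = v 4 := by
    norm_num [Rmat, mulVec, dotProduct, Fin.sum_univ_six, e0, e1, e2, e3, e4, e5]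
  have hm4 : (Rmat fc)ᵀ.mulVec v 4 = v 5 := by
    norm_num [Rmat, mulVec, dotProduct, Fin.sum_univ_six, e0, e1, e2, e3, e4, e5]
  have hm5' : (Rmat fc)ᵀ.mulVec v 5 = -(fc 0 * v 0 + fc 1 * v 1 + fc 2 * v 2
      + fc 3 * v 3 + fc 4 * v 4 + fc 5 * v 5) / fc 6 := by
    norm_num [Rmat, mulVec, dotProduct, Fin.sum_univ_six, e0, e1, e2, e3, e4, e5]
    ring
  have hm5 : (Rmat fc)ᵀ.mulVec v 5 * fc 6 = -(fc 0 * v 0 + fc 1 * v 1 + fc 2 * v 2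
      + fc 3 * v 3 + fc 4 * v 4 + fc 5 * v 5) := by
    rw [hm5', div_mul_cancel₀ _ hf6]
  have expand : ∀ u : Fin 6 → k, xiPoly fc u = C (u 0) * gPoly fc 0 + C (u 1) * gPoly fc 1
      + C (u 2) * gPoly fc 2 + C (u 3) * gPoly fc 3 + C (u 4) * gPoly fc 4
      + C (u 5 * fc 6) := by
    intro u
    rw [xiPoly, Fin.sum_univ_six, gPoly5, ← C_mul]
  rw [expand, expand, hm0, hm1, hm2, hm3, hm4, hm5]
  norm_num [gPoly, sexticPoly, e0, e1, e2, e3, e4, e5, Finset.sum_range_succ]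
  ring

theorem powX (hf6 : fc 6 ≠ 0) (m : ℕ) (v : Fin 6 → k) :
    ∃ q : Polynomial k, X ^ m * xiPoly fc v
      = q * sexticPoly fc + xiPoly fc ((((Rmat fc)ᵀ) ^ m).mulVec v) := by
  induction m with
  | zero => exact ⟨0, by simp⟩
  | succ m ih =>
    obtain ⟨q, hq⟩ := ih
    refine ⟨X * q + C (((((Rmat fc)ᵀ) ^ m).mulVec v) 0), ?_⟩
    rw [pow_succ', mul_assoc, hq, mul_add, mulX fc hf6, pow_succ', ← Matrix.mulVec_mulVec]
    ring

theorem master (hdeg : ∀ m, 7 ≤ m → fc m = 0) (hf6 : fc 6 ≠ 0) (u v : Fin 6 → k) :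
    ∃ q : Polynomial k, xiPoly fc u * xiPoly fc v
      = q * sexticPoly fc
        + xiPoly fc ((∑ m : Fin 6, (Tmat fc).mulVec u m • (((Rmat fc)ᵀ) ^ (m : ℕ))).mulVec v) := by
  choose q hq using fun m : ℕ => powX fc hf6 m v
  refine ⟨∑ m : Fin 6, C ((Tmat fc).mulVec u m) * q (m : ℕ), ?_⟩
  have hs : (∑ m : Fin 6, (Tmat fc).mulVec u m • (((Rmat fc)ᵀ) ^ (m : ℕ))).mulVec v
      = ∑ m : Fin 6, (Tmat fc).mulVec u m • ((((Rmat fc)ᵀ) ^ (m : ℕ)).mulVec v) := by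
    funext i
    simp only [mulVec, dotProduct, Matrix.sum_apply, Finset.sum_apply, Matrix.smul_apply,
      smul_eq_mul, Pi.smul_apply, Finset.sum_mul, Finset.mul_sum]
    rw [Finset.sum_comm]
    refine Finset.sum_congr rfl fun m _ => Finset.sum_congr rfl fun j _ => by simp [mul_assoc]
  rw [hs, xiPoly_vsum, xiPoly_eq_coeff fc hdeg u, Finset.sum_mul, Finset.sum_mul]
  rw [← Finset.sum_add_distrib]
  refine Finset.sum_congr rfl fun m _ => ?_
  rw [mul_assoc, hq (m : ℕ), mul_add]
  ring

theorem singleShift : ∀ m : Fin 6, (Rmat fc ^ (m : ℕ)) *ᵥ Pi.single 0 1 = Pi.single m 1 := by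
  have h : ∀ (a b : Fin 6), (a : ℕ) ≠ 5 → (b : ℕ) = (a : ℕ) + 1 →
      Rmat fc *ᵥ Pi.single a 1 = Pi.single b 1 := by
    intro a b ha hb
    funext i
    simp only [Rmat, mulVec, dotProduct, Pi.single_apply, Matrix.of_apply, mul_ite, mul_one,
      mul_zero]
    rw [Finset.sum_eq_single a (fun x _ hx => by rw [if_neg hx]) (by simp)]
    simp [Fin.ext_iff, hb, ha, eq_comm]
  have h0 := h 0 1 (by decide) rfl
  have h1 := h 1 2 (by decide) rfl
  have h2 := h 2 3 (by decide) rfl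
  have h3 := h 3 4 (by decide) rfl
  have h4 := h 4 5 (by decide) rfl
  have s0 : Rmat fc ^ 0 *ᵥ Pi.single (0 : Fin 6) 1 = Pi.single 0 1 := by
    rw [pow_zero, Matrix.one_mulVec]
  have s1 : Rmat fc ^ 1 *ᵥ Pi.single (0 : Fin 6) 1 = Pi.single 1 1 := by rw [pow_one, h0]
  have s2 : Rmat fc ^ 2 *ᵥ Pi.single (0 : Fin 6) 1 = Pi.single 2 1 := by
    rw [pow_succ', ← mulVec_mulVec, s1, h1]
  have s3 : Rmat fc ^ 3 *ᵥ Pi.single (0 : Fin 6) 1 = Pi.single 3 1 := by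
    rw [pow_succ', ← mulVec_mulVec, s2, h2]
  have s4 : Rmat fc ^ 4 *ᵥ Pi.single (0 : Fin 6) 1 = Pi.single 4 1 := by
    rw [pow_succ', ← mulVec_mulVec, s3, h3]
  have s5 : Rmat fc ^ 5 *ᵥ Pi.single (0 : Fin 6) 1 = Pi.single 5 1 := by
    rw [pow_succ', ← mulVec_mulVec, s4, h4]
  intro m
  fin_cases m
  · exact s0
  · exact s1
  · exact s2
  · exact s3
  · exact s4
  · exact s5

theorem rowShift (p : ℕ) (m : Fin 6) (u : Fin 6 → k) :
    (((Rmat fc)ᵀ ^ p) *ᵥ u) m = (((Rmat fc)ᵀ ^ (p + (m : ℕ))) *ᵥ u) 0 := by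
  have hrow : ∀ l : Fin 6, ((Rmat fc)ᵀ ^ p) m l = ((Rmat fc)ᵀ ^ (p + (m : ℕ))) 0 l := by
    intro l
    rw [← transpose_pow, ← transpose_pow, transpose_apply, transpose_apply]
    have h1 : (Rmat fc ^ p) l m = ((Rmat fc ^ p) *ᵥ Pi.single m 1) l := by
      simp [mulVec_single]
    have h2 : (Rmat fc ^ (p + (m : ℕ))) l 0 = ((Rmat fc ^ (p + (m : ℕ))) *ᵥ Pi.single 0 1) l := by
      simp [mulVec_single]
    rw [h1, h2, ← singleShift fc m, mulVec_mulVec, ← pow_add]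
  simp only [mulVec, dotProduct]
  exact Finset.sum_congr rfl fun l _ => by rw [hrow l]

theorem sum_smul_mulVec_apply (c : Fin 6 → k) (A : Fin 6 → Matrix (Fin 6) (Fin 6) k)
    (v : Fin 6 → k) (j : Fin 6) :
    ((∑ m : Fin 6, c m • A m) *ᵥ v) j = ∑ m : Fin 6, c m * ((A m *ᵥ v) j) := by
  simp only [mulVec, dotProduct, Matrix.sum_apply, Finset.sum_apply, Matrix.smul_apply,
    smul_eq_mul, Finset.sum_mul, Finset.mul_sum]
  rw [Finset.sum_comm]
  exact Finset.sum_congr rfl fun m _ => Finset.sum_congr rfl fun l _ => by ring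

theorem dot_sum_smul_mulVec (c : Fin 6 → k) (A : Fin 6 → Matrix (Fin 6) (Fin 6) k)
    (u v : Fin 6 → k) :
    u ⬝ᵥ ((∑ m : Fin 6, c m • A m) *ᵥ v) = ∑ m : Fin 6, c m * (u ⬝ᵥ (A m *ᵥ v)) := by
  simp only [dotProduct, sum_smul_mulVec_apply, Finset.mul_sum, Finset.sum_mul]
  rw [Finset.sum_comm]
  exact Finset.sum_congr rfl fun m _ => Finset.sum_congr rfl fun j _ => by ring

theorem quadForm_eq (p : ℕ) (w : Fin 6 → k) :
    w ⬝ᵥ ((Rmat fc ^ p * Tmat fc) *ᵥ w)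
      = ∑ m : Fin 6, (Tmat fc *ᵥ w) m * ((((Rmat fc)ᵀ ^ (p + (m : ℕ))) *ᵥ w) 0) := by
  rw [← mulVec_mulVec, Matrix.dotProduct_mulVec, ← Matrix.mulVec_transpose, transpose_pow]
  simp only [dotProduct]
  exact Finset.sum_congr rfl fun m _ => by rw [rowShift fc p m w]; ring

theorem mulVec_vsum (A : Matrix (Fin 6) (Fin 6) k) (c : Fin 6 → k) (y : Fin 6 → Fin 6 → k) :
    A *ᵥ (∑ i : Fin 6, c i • y i) = ∑ i : Fin 6, c i • (A *ᵥ y i) := by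
  funext l
  simp only [mulVec, dotProduct, Finset.sum_apply, Pi.smul_apply, smul_eq_mul, Finset.mul_sum]
  rw [Finset.sum_comm]
  exact Finset.sum_congr rfl fun i _ => Finset.sum_congr rfl fun r _ => by ring

theorem Qform_eval (d w : Fin 6 → k) (j : Fin 6) :
    Qform fc d (j : ℕ) w
      = fc 6 * (((∑ m : Fin 6, (Tmat fc *ᵥ w) m • ((Rmat fc)ᵀ ^ (m : ℕ)))
          *ᵥ (∑ i : Fin 6, d i • (((Rmat fc)ᵀ ^ (i : ℕ)) *ᵥ w))) j) := by
  rw [Qform, Qmat, dot_sum_smul_mulVec, sum_smul_mulVec_apply, Finset.mul_sum]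
  have hDw : ∀ m : Fin 6,
      ((Rmat fc)ᵀ ^ (m : ℕ)) *ᵥ (∑ i : Fin 6, d i • (((Rmat fc)ᵀ ^ (i : ℕ)) *ᵥ w))
        = ∑ i : Fin 6, d i • (((Rmat fc)ᵀ ^ ((m : ℕ) + (i : ℕ))) *ᵥ w) := by
    intro m
    rw [mulVec_vsum]
    exact Finset.sum_congr rfl fun i _ => by rw [mulVec_mulVec, ← pow_add]
  have key : ∀ m i : Fin 6, (((Rmat fc)ᵀ ^ ((m : ℕ) + (i : ℕ))) *ᵥ w) j
      = (((Rmat fc)ᵀ ^ (((i : ℕ) + (j : ℕ)) + (m : ℕ))) *ᵥ w) 0 := by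
    intro m i
    rw [rowShift fc ((m : ℕ) + (i : ℕ)) j w,
      show (m : ℕ) + (i : ℕ) + (j : ℕ) = ((i : ℕ) + (j : ℕ)) + (m : ℕ) by omega]
  have hL : ∀ i : Fin 6, fc 6 * d i * (w ⬝ᵥ (Rmat fc ^ ((i : ℕ) + (j : ℕ)) * Tmat fc) *ᵥ w)
      = ∑ m : Fin 6, fc 6 * d i * ((Tmat fc *ᵥ w) m
          * ((((Rmat fc)ᵀ ^ (((i : ℕ) + (j : ℕ)) + (m : ℕ))) *ᵥ w) 0)) := fun i => by
    rw [quadForm_eq fc ((i : ℕ) + (j : ℕ)) w, Finset.mul_sum]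
  have hR : ∀ m : Fin 6, fc 6 * ((Tmat fc *ᵥ w) m
        * ((((Rmat fc)ᵀ ^ (m : ℕ)) *ᵥ (∑ i : Fin 6, d i • (((Rmat fc)ᵀ ^ (i : ℕ)) *ᵥ w))) j))
      = ∑ i : Fin 6, fc 6 * ((Tmat fc *ᵥ w) m
          * (d i * ((((Rmat fc)ᵀ ^ (((i : ℕ) + (j : ℕ)) + (m : ℕ))) *ᵥ w) 0))) := fun m => by
    rw [hDw m]
    simp only [Finset.sum_apply, Pi.smul_apply, smul_eq_mul]
    rw [Finset.mul_sum, Finset.mul_sum]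
    exact Finset.sum_congr rfl fun i _ => by rw [key m i]
  simp only [hL, hR]
  rw [Finset.sum_comm]
  exact Finset.sum_congr rfl fun i _ => Finset.sum_congr rfl fun m _ => by ring

theorem starPoly (hdeg : ∀ m, 7 ≤ m → fc m = 0) (hf6 : fc 6 ≠ 0) (d w : Fin 6 → k) :
    ∃ q : Polynomial k, C (fc 6) * (deltaPoly d * xiPoly fc w ^ 2)
      = q * sexticPoly fc + ∑ j : Fin 6, C (Qform fc d (j : ℕ) w) * gPoly fc j := by
  choose q1 hq1 using fun i : ℕ => powX fc hf6 i w
  set Dw : Fin 6 → k := ∑ i : Fin 6, d i • (((Rmat fc)ᵀ ^ (i : ℕ)) *ᵥ w) with hDwdef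
  have step1 : deltaPoly d * xiPoly fc w
      = (∑ i : Fin 6, C (d i) * q1 (i : ℕ)) * sexticPoly fc + xiPoly fc Dw := by
    rw [deltaPoly, Finset.sum_mul, hDwdef, xiPoly_vsum, Finset.sum_mul, ← Finset.sum_add_distrib]
    refine Finset.sum_congr rfl fun i _ => ?_
    rw [mul_assoc, hq1 (i : ℕ), mul_add]
    ring
  obtain ⟨q2, hq2⟩ := master fc hdeg hf6 w Dw
  refine ⟨C (fc 6) * ((∑ i : Fin 6, C (d i) * q1 (i : ℕ)) * xiPoly fc w + q2), ?_⟩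
  have hsum : ∑ j : Fin 6, C (Qform fc d (j : ℕ) w) * gPoly fc j
      = xiPoly fc (fc 6 • ((∑ m : Fin 6, (Tmat fc).mulVec w m • (((Rmat fc)ᵀ) ^ (m : ℕ)))
          *ᵥ Dw)) := by
    rw [xiPoly]
    exact Finset.sum_congr rfl fun j _ => by
      rw [Pi.smul_apply, smul_eq_mul, ← Qform_eval fc d w j]
  rw [hsum, xiPoly_smul]
  calc C (fc 6) * (deltaPoly d * xiPoly fc w ^ 2)
      = C (fc 6) * ((deltaPoly d * xiPoly fc w) * xiPoly fc w) := by ring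
    _ = C (fc 6) * (((∑ i : Fin 6, C (d i) * q1 (i : ℕ)) * sexticPoly fc + xiPoly fc Dw)
          * xiPoly fc w) := by rw [step1]
    _ = C (fc 6) * ((∑ i : Fin 6, C (d i) * q1 (i : ℕ)) * sexticPoly fc * xiPoly fc w)
          + C (fc 6) * (xiPoly fc w * xiPoly fc Dw) := by ring
    _ = _ := by rw [hq2]; ring

theorem star (hdeg : ∀ m, 7 ≤ m → fc m = 0) (hf6 : fc 6 ≠ 0) (d w : Fin 6 → k) (t : k)
    (ht : (sexticPoly fc).eval t = 0) :
    fc 6 * ((deltaPoly d).eval t * ((xiPoly fc w).eval t) ^ 2)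
      = ∑ j : Fin 6, Qform fc d (j : ℕ) w * (gPoly fc j).eval t := by
  obtain ⟨q, hq⟩ := starPoly fc hdeg hf6 d w
  have := congrArg (Polynomial.eval t) hq
  simpa [ht, Polynomial.eval_finset_sum] using this

end FiberDup

/-- The fiber of the twisted duplication map over a root `ω ≠ α` of `f` is the hyperplane
section given by `ev_ω`: if `f(α) = f(ω) = 0`, `ω ≠ α`, `δ(ω) ≠ 0`, and `ξ` (with
coordinate vector `w`) satisfies `Q₀^{(δ)}(ξ) = Q₁^{(δ)}(ξ) = Q₂^{(δ)}(ξ) = 0` and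
`ξ(α) = 0`, then `ξ(ω) = 0` iff
`f₆Q₃^{(δ)}(ξ)·ω + (f₅ + f₆α)Q₃^{(δ)}(ξ) + f₆Q₄^{(δ)}(ξ) = 0`. -/
theorem fiber_of_twisted_duplication {k : Type*} [Field k] (fc : ℕ → k)
    (hdeg : ∀ m, 7 ≤ m → fc m = 0) (hf6 : fc 6 ≠ 0)
    (α ω : k) (hα : (sexticPoly fc).eval α = 0) (hω : (sexticPoly fc).eval ω = 0)
    (hωα : ω ≠ α)
    (d : Fin 6 → k) (hδω : (deltaPoly d).eval ω ≠ 0)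
    (w : Fin 6 → k)
    (hQ0 : Qform fc d 0 w = 0) (hQ1 : Qform fc d 1 w = 0) (hQ2 : Qform fc d 2 w = 0)
    (hξα : (xiPoly fc w).eval α = 0) :
    (xiPoly fc w).eval ω = 0 ↔
      fc 6 * Qform fc d 3 w * ω +
        (fc 5 + fc 6 * α) * Qform fc d 3 w + fc 6 * Qform fc d 4 w = 0 := by
  have e0 : (((0 : Fin 6)) : ℕ) = 0 := rfl
  have e1 : (((1 : Fin 6)) : ℕ) = 1 := rfl
  have e2 : (((2 : Fin 6)) : ℕ) = 2 := rfl
  have e3 : (((3 : Fin 6)) : ℕ) = 3 := rfl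
  have e4 : (((4 : Fin 6)) : ℕ) = 4 := rfl
  have e5 : (((5 : Fin 6)) : ℕ) = 5 := rfl
  have hg3 : ∀ t : k, (gPoly fc 3).eval t = fc 4 + fc 5 * t + fc 6 * t ^ 2 := by
    intro t
    norm_num [gPoly, e3, Finset.sum_range_succ]
  have hg4 : ∀ t : k, (gPoly fc 4).eval t = fc 5 + fc 6 * t := by
    intro t
    norm_num [gPoly, e4, Finset.sum_range_succ]
  have hg5 : ∀ t : k, (gPoly fc 5).eval t = fc 6 := by
    intro t
    rw [FiberDup.gPoly5, Polynomial.eval_C]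
  have hstarα := FiberDup.star fc hdeg hf6 d w α hα
  have hstarω := FiberDup.star fc hdeg hf6 d w ω hω
  rw [Fin.sum_univ_six] at hstarα hstarω
  simp only [e0, e1, e2, e3, e4, e5, hQ0, hQ1, hQ2, hξα, hg3, hg4, hg5, zero_mul, add_zero,
    zero_add, mul_zero] at hstarα hstarω
  -- hstarα : 0 = Q3 * (f4 + f5 α + f6 α²) + Q4 * (f5 + f6 α) + Q5 * f6 (up to arrangement)
  have key : fc 6 * ((deltaPoly d).eval ω * ((xiPoly fc w).eval ω) ^ 2)
      = (ω - α) * (fc 6 * Qform fc d 3 w * ω +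
          (fc 5 + fc 6 * α) * Qform fc d 3 w + fc 6 * Qform fc d 4 w) := by
    linear_combination hstarω - hstarα
  constructor
  · intro h0
    rw [h0] at key
    have h1 : (ω - α) ≠ 0 := sub_ne_zero_of_ne hωα
    have h2 : (ω - α) * (fc 6 * Qform fc d 3 w * ω +
        (fc 5 + fc 6 * α) * Qform fc d 3 w + fc 6 * Qform fc d 4 w) = 0 := by
      rw [← key]; ring
    exact (mul_eq_zero.mp h2).resolve_left h1
  · intro hE
    rw [hE, mul_zero] at key
    have h2 : ((xiPoly fc w).eval ω) ^ 2 = 0 := by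
      have := mul_eq_zero.mp key
      rcases this with h | h
      · exact absurd h hf6
      · exact (mul_eq_zero.mp h).resolve_left hδω
    exact pow_eq_zero_iff (by norm_num) |>.mp h2
end

section
/- Suppose f factors over k as f(x) = (x − α)(x − ω)h(x) with h(x) = h₀ + h₁x + h₂x² + h₃x³ + h₄x⁴ = f₆(x − β₁)(x − β₂)(x − β₃)(x − β₄) for α, ω, β₁, β₂, β₃, β₄ ∈ k, and define Y : L → k by Y(η) = η(β₁)·η(β₂)·η(β₃)·η(β₄). Suppose δ, ξ ∈ L and a, b ∈ k satisfy f₆·δ·ξ² = image of (X − α)(aX + b) in L. Then Y(δ)·(f₆³Y(ξ))² = h(α)·(h₄b⁴ − h₃b³a + h₂b²a² − h₁ba³ + h₀a⁴), i.e., Y(δ)·(f₆³Y(ξ))² = h(α)·H(−b, a), where H(x, z) = h₄x⁴ + h₃x³z + h₂x²z² + h₁xz³ + h₀z⁴ is the homogenization of h. (This identity shows that the twisted duplication map on Z_δ factors through the genus one curve D_{δ,ω} : Y(δ)y² = h(α)H(x, z).) -/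
open Polynomial Matrix

/-- The identity showing the twisted duplication map factors through the genus one curve
`D_{δ,ω} : Y(δ)y² = h(α)H(x, z)`: if `f = (x − α)(x − ω)h` with
`h = h₀ + h₁x + h₂x² + h₃x³ + h₄x⁴ = f₆(x − β₁)(x − β₂)(x − β₃)(x − β₄)`,
`Y(η) = η(β₁)η(β₂)η(β₃)η(β₄)`, and `f₆·δ·ξ² = (X − α)(aX + b)` in `L`, then
`Y(δ)·(f₆³Y(ξ))² = h(α)·H(−b, a)`. -/
theorem factors_through_genus_one {k : Type*} [Field k] (fc : ℕ → k)
    (hdeg : ∀ m, 7 ≤ m → fc m = 0) (hf6 : fc 6 ≠ 0)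
    (α ω β₁ β₂ β₃ β₄ h₀ h₁ h₂ h₃ h₄ : k)
    (hfact : sexticPoly fc = (X - C α) * (X - C ω) *
      (C h₀ + C h₁ * X + C h₂ * X ^ 2 + C h₃ * X ^ 3 + C h₄ * X ^ 4))
    (hroots : C h₀ + C h₁ * X + C h₂ * X ^ 2 + C h₃ * X ^ 3 + C h₄ * X ^ 4 =
      C (fc 6) * (X - C β₁) * (X - C β₂) * (X - C β₃) * (X - C β₄))
    (δp ξp : Polynomial k) (a b : k)
    (hrep : AdjoinRoot.mk (sexticPoly fc) (C (fc 6) * δp * ξp ^ 2) =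
      AdjoinRoot.mk (sexticPoly fc) ((X - C α) * (C a * X + C b))) :
    (δp.eval β₁ * δp.eval β₂ * δp.eval β₃ * δp.eval β₄) *
        (fc 6 ^ 3 * (ξp.eval β₁ * ξp.eval β₂ * ξp.eval β₃ * ξp.eval β₄)) ^ 2 =
      (h₀ + h₁ * α + h₂ * α ^ 2 + h₃ * α ^ 3 + h₄ * α ^ 4) *
        (h₄ * b ^ 4 - h₃ * b ^ 3 * a + h₂ * b ^ 2 * a ^ 2 - h₁ * b * a ^ 3 + h₀ * a ^ 4) := by
  set c := fc 6 with hc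
  -- coefficient relations
  have h' : C h₀ + C h₁ * X + C h₂ * X ^ 2 + C h₃ * X ^ 3 + C h₄ * X ^ 4 =
      C (c*(β₁*β₂*β₃*β₄)) + C (-(c*(β₁*β₂*β₃ + β₁*β₂*β₄ + β₁*β₃*β₄ + β₂*β₃*β₄))) * X
      + C (c*(β₁*β₂ + β₁*β₃ + β₁*β₄ + β₂*β₃ + β₂*β₄ + β₃*β₄)) * X ^ 2
      + C (-(c*(β₁+β₂+β₃+β₄))) * X ^ 3 + C c * X ^ 4 := by
    rw [hroots]; simp only [_root_.map_mul, _root_.map_add, map_neg]; ring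
  have e4 : h₄ = c := by
    have h4 := congrArg (fun p => Polynomial.coeff p 4) h'
    simp only [coeff_add, coeff_C_mul, coeff_X_pow, coeff_C, coeff_X] at h4
    simpa using h4
  have e3 : h₃ = -(c*(β₁+β₂+β₃+β₄)) := by
    have h3 := congrArg (fun p => Polynomial.coeff p 3) h'
    simp only [coeff_add, coeff_C_mul, coeff_X_pow, coeff_C, coeff_X] at h3
    simpa using h3
  have e2 : h₂ = c*(β₁*β₂ + β₁*β₃ + β₁*β₄ + β₂*β₃ + β₂*β₄ + β₃*β₄) := by
    have h2 := congrArg (fun p => Polynomial.coeff p 2) h'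
    simp only [coeff_add, coeff_C_mul, coeff_X_pow, coeff_C, coeff_X] at h2
    simpa using h2
  have e1 : h₁ = -(c*(β₁*β₂*β₃ + β₁*β₂*β₄ + β₁*β₃*β₄ + β₂*β₃*β₄)) := by
    have h1 := congrArg (fun p => Polynomial.coeff p 1) h'
    simp only [coeff_add, coeff_C_mul, coeff_X_pow, coeff_C, coeff_X] at h1
    simpa using h1
  have e0 : h₀ = c*(β₁*β₂*β₃*β₄) := by
    have h0 := congrArg (fun p => Polynomial.coeff p 0) h'
    simp only [coeff_add, coeff_C_mul, coeff_X_pow, coeff_C, coeff_X] at h0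
    simpa using h0
  -- divisibility
  obtain ⟨q, hq⟩ := (AdjoinRoot.mk_eq_mk).mp hrep
  have key : ∀ β : k, β = β₁ ∨ β = β₂ ∨ β = β₃ ∨ β = β₄ →
      c * δp.eval β * ξp.eval β ^ 2 = (β - α) * (a * β + b) := by
    intro β hβ
    have hf0 : (sexticPoly fc).eval β = 0 := by
      rw [hfact, hroots]
      simp only [eval_mul, eval_sub, eval_add, eval_pow, eval_C, eval_X]
      rcases hβ with rfl | rfl | rfl | rfl <;> ring
    have hq' := congrArg (Polynomial.eval β) hq
    simp only [eval_mul, eval_sub, eval_add, eval_pow, eval_C, eval_X, hf0] at hq'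
    linear_combination hq'
  have E₁ := key β₁ (Or.inl rfl)
  have E₂ := key β₂ (Or.inr (Or.inl rfl))
  have E₃ := key β₃ (Or.inr (Or.inr (Or.inl rfl)))
  have E₄ := key β₄ (Or.inr (Or.inr (Or.inr rfl)))
  have P : (c * δp.eval β₁ * ξp.eval β₁ ^ 2) * (c * δp.eval β₂ * ξp.eval β₂ ^ 2)
      * (c * δp.eval β₃ * ξp.eval β₃ ^ 2) * (c * δp.eval β₄ * ξp.eval β₄ ^ 2)
      = ((β₁ - α) * (a * β₁ + b)) * ((β₂ - α) * (a * β₂ + b))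
        * ((β₃ - α) * (a * β₃ + b)) * ((β₄ - α) * (a * β₄ + b)) := by
    rw [E₁, E₂, E₃, E₄]
  rw [e0, e1, e2, e3, e4]
  linear_combination c ^ 2 * P
end

section
/- For every ξ ∈ L and every j with 0 ≤ j ≤ 5, one has f₆·C_j^{(δ)}(ξ) = ∑_{i=0}^{5} f_{i+j+1}·Q_i^{(δ)}(ξ), with the convention f_m = 0 for m > 6. In particular, f₆C₁^{(δ)} = f₂Q₀^{(δ)} + f₃Q₁^{(δ)} + f₄Q₂^{(δ)} + f₅Q₃^{(δ)} + f₆Q₄^{(δ)} and f₆C₂^{(δ)} = f₃Q₀^{(δ)} + f₄Q₁^{(δ)} + f₅Q₂^{(δ)} + f₆Q₃^{(δ)} as functions on L. -/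
open Polynomial Matrix

noncomputable section

namespace CQaux
variable {k : Type*} [Field k] (fc : ℕ → k)

lemma coeff_sextic (hdeg : ∀ m, 7 ≤ m → fc m = 0) (m : ℕ) :
    (sexticPoly fc).coeff m = fc m := by
  unfold sexticPoly
  rw [finset_sum_coeff]
  simp only [coeff_C_mul, coeff_X_pow]
  by_cases h : m < 7
  · rw [Finset.sum_eq_single m]
    · simp
    · intro b _ hb; simp [Ne.symm hb]
    · simp [h]
  · push_neg at h
    rw [Finset.sum_eq_zero fun i hi => ?_, (hdeg m h).symm]
    simp only [Finset.mem_range] at hi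
    have : ¬ (m = i) := by omega
    simp [this]

lemma sextic_degree (hdeg : ∀ m, 7 ≤ m → fc m = 0) (hf6 : fc 6 ≠ 0) :
    (sexticPoly fc).degree = 6 := by
  have h1 : (sexticPoly fc).degree ≤ 6 := by
    rw [degree_le_iff_coeff_zero]
    intro m hm
    rw [coeff_sextic fc hdeg]
    exact hdeg m (by exact_mod_cast hm)
  have h2 : ((6 : ℕ) : WithBot ℕ) ≤ (sexticPoly fc).degree := by
    apply Polynomial.le_degree_of_ne_zero
    rw [coeff_sextic fc hdeg]; exact hf6
  exact le_antisymm h1 (by exact_mod_cast h2)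

/-- the monic normalization of f -/
def fm : Polynomial k := C (fc 6)⁻¹ * sexticPoly fc

lemma fm_monic (hdeg : ∀ m, 7 ≤ m → fc m = 0) (hf6 : fc 6 ≠ 0) : (fm fc).Monic := by
  have hdeg6 := sextic_degree fc hdeg hf6
  have hlead : (sexticPoly fc).leadingCoeff = fc 6 := by
    rw [leadingCoeff, natDegree_eq_of_degree_eq_some hdeg6, coeff_sextic fc hdeg]
  unfold fm Monic
  rw [leadingCoeff_mul, leadingCoeff_C, hlead, inv_mul_cancel₀ hf6]

lemma fm_degree (hdeg : ∀ m, 7 ≤ m → fc m = 0) (hf6 : fc 6 ≠ 0) : (fm fc).degree = 6 := by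
  unfold fm
  rw [degree_C_mul (inv_ne_zero hf6), sextic_degree fc hdeg hf6]

lemma fm_coeff (hdeg : ∀ m, 7 ≤ m → fc m = 0) (m : ℕ) :
    (fm fc).coeff m = (fc 6)⁻¹ * fc m := by
  unfold fm; rw [coeff_C_mul, coeff_sextic fc hdeg]

/-- reduction mod f, as a coefficient vector -/
def red (p : Polynomial k) : Fin 6 → k := fun i => (p %ₘ fm fc).coeff (i : ℕ)

lemma red_of_degree_le (hdeg : ∀ m, 7 ≤ m → fc m = 0) (hf6 : fc 6 ≠ 0)
    {p : Polynomial k} (hp : p.degree ≤ 5) (i : Fin 6) :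
    red fc p i = p.coeff (i : ℕ) := by
  unfold red
  rw [(modByMonic_eq_self_iff (fm_monic fc hdeg hf6)).2]
  rw [fm_degree fc hdeg hf6]
  exact lt_of_le_of_lt hp (by norm_num)

lemma red_add (p q : Polynomial k) : red fc (p + q) = red fc p + red fc q := by
  funext i; simp [red, add_modByMonic]

lemma red_smul (c : k) (p : Polynomial k) : red fc (C c * p) = c • red fc p := by
  funext i
  simp only [red, Pi.smul_apply, smul_eq_mul]
  rw [← smul_eq_C_mul, smul_modByMonic, coeff_smul, smul_eq_mul]

lemma red_congr (hdeg : ∀ m, 7 ≤ m → fc m = 0) (hf6 : fc 6 ≠ 0) {p q : Polynomial k} (h : fm fc ∣ p - q) : red fc p = red fc q := by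
  have : p %ₘ fm fc = q %ₘ fm fc := by
    have h0 : (p - q) %ₘ fm fc = 0 :=
      (modByMonic_eq_zero_iff_dvd (fm_monic fc hdeg hf6)).2 h
    have := sub_modByMonic p q (fm fc)
    rw [h0] at this
    linear_combination (norm := ring_nf) -this
  unfold red; rw [this]

lemma red_X_mul (hdeg : ∀ m, 7 ≤ m → fc m = 0) (hf6 : fc 6 ≠ 0) (p : Polynomial k) :
    red fc (X * p) = (Rmat fc).mulVec (red fc p) := by
  have hm := fm_monic fc hdeg hf6
  have hd := fm_degree fc hdeg hf6
  set q := p %ₘ fm fc with hq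
  have hqdeg : q.degree < 6 := by rw [← hd]; exact degree_modByMonic_lt p hm
  have h1 : red fc (X * p) = red fc (X * q) := by
    apply red_congr fc hdeg hf6
    rw [← mul_sub]
    have : p - q = fm fc * (p /ₘ fm fc) := by
      conv_lhs => rw [← modByMonic_add_div p (fm fc)]
      ring
    rw [this]
    exact Dvd.dvd.mul_left (Dvd.intro _ rfl) X
  have hqc : ∀ m : ℕ, 6 ≤ m → q.coeff m = 0 := fun m hm =>
    coeff_eq_zero_of_degree_lt (lt_of_lt_of_le hqdeg (by exact_mod_cast Nat.cast_le.2 hm))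
  have h2 : (X * q) %ₘ fm fc = X * q - C (q.coeff 5) * fm fc := by
    refine (div_modByMonic_unique (f := X * q) (g := fm fc) (C (q.coeff 5))
      (X * q - C (q.coeff 5) * fm fc) hm ⟨by ring, ?_⟩).2
    rw [hd]
    have : (X * q - C (q.coeff 5) * fm fc).degree < ((6 : ℕ) : WithBot ℕ) := by
      rw [degree_lt_iff_coeff_zero]
      intro m hm6
      have hm6' : (6 : ℕ) ≤ m := by exact_mod_cast hm6
      rcases Nat.exists_eq_add_of_le hm6' with ⟨c, rfl⟩
      rw [coeff_sub, coeff_C_mul, fm_coeff fc hdeg]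
      rcases c with _ | c
      · rw [show 6 + 0 = 5 + 1 from rfl, coeff_X_mul]
        field_simp
        ring
      · rw [show 6 + (c+1) = (5 + (c+1)) + 1 by omega, coeff_X_mul,
          hqc (5 + (c+1)) (by omega), hdeg (5 + (c+1) + 1) (by omega)]
        ring
    exact_mod_cast this
  have hXq : ∀ n : ℕ, (X * q).coeff n = if n = 0 then 0 else q.coeff (n-1) := by
    intro n
    rcases n with _ | n
    · simp
    · simp [coeff_X_mul]
  funext i
  rw [h1]
  show ((X * q) %ₘ fm fc).coeff (i:ℕ) = _
  rw [h2]
  have hred : red fc p = fun j : Fin 6 => q.coeff (j : ℕ) := rfl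
  fin_cases i
  all_goals
    simp only [coeff_sub, coeff_C_mul, fm_coeff fc hdeg, hXq, hred, Matrix.mulVec,
      dotProduct, Fin.sum_univ_six, Rmat, Matrix.of_apply, Fin.isValue]
  all_goals
    norm_num [show ((3:Fin 6):ℕ) = 3 from rfl, show ((4:Fin 6):ℕ) = 4 from rfl,
      show ((5:Fin 6):ℕ) = 5 from rfl]
  all_goals (try field_simp)
  all_goals (first | (left; ring) | ring)

lemma red_Xpow_mul (hdeg : ∀ m, 7 ≤ m → fc m = 0) (hf6 : fc 6 ≠ 0) (n : ℕ) (p : Polynomial k) :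
    red fc (X ^ n * p) = ((Rmat fc) ^ n).mulVec (red fc p) := by
  induction n with
  | zero => simp [Matrix.mulVec_one]  -- may fail; fix below
  | succ n ih =>
      have : X ^ (n+1) * p = X * (X ^ n * p) := by ring
      rw [this, red_X_mul fc hdeg hf6, ih, pow_succ']
      rw [← Matrix.mulVec_mulVec]

/-- red as a linear map -/
def redLM : Polynomial k →ₗ[k] (Fin 6 → k) where
  toFun := red fc
  map_add' := red_add fc
  map_smul' := fun c p => by
    simp only [RingHom.id_apply]
    have := red_smul fc c p
    rwa [← smul_eq_C_mul] at this

lemma Tmat_symm : (Tmat fc)ᵀ = Tmat fc := by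
  ext i j
  simp only [Matrix.transpose_apply, Tmat, Matrix.of_apply]
  congr 1
  omega

lemma RT_comm (hdeg : ∀ m, 7 ≤ m → fc m = 0) (hf6 : fc 6 ≠ 0) :
    Rmat fc * Tmat fc = Tmat fc * (Rmat fc)ᵀ := by
  have h7 : fc 7 = 0 := hdeg 7 (by norm_num)
  have h8 : fc 8 = 0 := hdeg 8 (by norm_num)
  have h9 : fc 9 = 0 := hdeg 9 (by norm_num)
  have h10 : fc 10 = 0 := hdeg 10 (by norm_num)
  have h11 : fc 11 = 0 := hdeg 11 (by norm_num)
  ext i j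
  fin_cases i <;> fin_cases j <;>
    simp [Rmat, Tmat, Matrix.mul_apply, Fin.sum_univ_six, Matrix.transpose_apply,
      show ((0:Fin 6):ℕ) = 0 from rfl, show ((1:Fin 6):ℕ) = 1 from rfl,
      show ((2:Fin 6):ℕ) = 2 from rfl, show ((3:Fin 6):ℕ) = 3 from rfl,
      show ((4:Fin 6):ℕ) = 4 from rfl, show ((5:Fin 6):ℕ) = 5 from rfl,
      h7, h8, h9, h10, h11]
  all_goals (try field_simp)
  all_goals (first | rfl | (left; ring) | ring)

lemma RnT_comm (hdeg : ∀ m, 7 ≤ m → fc m = 0) (hf6 : fc 6 ≠ 0) (n : ℕ) :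
    (Rmat fc) ^ n * Tmat fc = Tmat fc * ((Rmat fc)ᵀ) ^ n := by
  induction n with
  | zero => simp
  | succ n ih =>
      rw [pow_succ', mul_assoc, ih, ← mul_assoc, RT_comm fc hdeg hf6, mul_assoc, ← pow_succ']

lemma RnT_symm (hdeg : ∀ m, 7 ≤ m → fc m = 0) (hf6 : fc 6 ≠ 0) (n : ℕ) (i j : Fin 6) :
    ((Rmat fc) ^ n * Tmat fc) i j = ((Rmat fc) ^ n * Tmat fc) j i := by
  have h : ((Rmat fc) ^ n * Tmat fc)ᵀ = (Rmat fc) ^ n * Tmat fc := by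
    rw [Matrix.transpose_mul, Tmat_symm, Matrix.transpose_pow]
    exact (RnT_comm fc hdeg hf6 n).symm
  have h2 : ((Rmat fc) ^ n * Tmat fc)ᵀ j i = ((Rmat fc) ^ n * Tmat fc) j i := by rw [h]
  simpa using h2

lemma sum_smul_mulVec {α : Type*} (s : Finset α) (c : α → k)
    (A : α → Matrix (Fin 6) (Fin 6) k) (v : Fin 6 → k) :
    (∑ m ∈ s, c m • A m).mulVec v = ∑ m ∈ s, c m • (A m).mulVec v := by
  funext i
  simp only [Matrix.mulVec, dotProduct, Finset.sum_apply, Matrix.sum_apply,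
    Matrix.smul_apply, Pi.smul_apply, smul_eq_mul, Finset.sum_mul, Finset.mul_sum]
  rw [Finset.sum_comm]
  exact Finset.sum_congr rfl fun y _ => Finset.sum_congr rfl fun x _ => by ring

lemma red_sum {α : Type*} (s : Finset α) (F : α → Polynomial k) :
    red fc (∑ m ∈ s, F m) = ∑ m ∈ s, red fc (F m) :=
  map_sum (redLM fc) F s

/-- the matrix of multiplication by `gPoly i` -/
def Sg (i : Fin 6) : Matrix (Fin 6) (Fin 6) k :=
  ∑ m : Fin 6, fc ((i : ℕ) + 1 + (m : ℕ)) • (Rmat fc) ^ (m : ℕ)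

/-- the matrix of multiplication by `deltaPoly d` -/
def Dmat (d : Fin 6 → k) : Matrix (Fin 6) (Fin 6) k :=
  ∑ m : Fin 6, d m • (Rmat fc) ^ (m : ℕ)

lemma red_g_mul (hdeg : ∀ m, 7 ≤ m → fc m = 0) (hf6 : fc 6 ≠ 0) (i : Fin 6) (p : Polynomial k) :
    red fc (gPoly fc i * p) = (Sg fc i).mulVec (red fc p) := by
  have h1 : gPoly fc i * p = ∑ j ∈ Finset.range (6 - (i : ℕ)),
      C (fc ((i : ℕ) + 1 + j)) * (X ^ j * p) := by
    rw [gPoly, Finset.sum_mul]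
    exact Finset.sum_congr rfl fun j _ => by ring
  rw [h1, red_sum]
  have h2 : ∀ j ∈ Finset.range (6 - (i : ℕ)),
      red fc (C (fc ((i : ℕ) + 1 + j)) * (X ^ j * p))
        = fc ((i : ℕ) + 1 + j) • ((Rmat fc) ^ j).mulVec (red fc p) := fun j _ => by
    rw [red_smul, red_Xpow_mul fc hdeg hf6]
  rw [Finset.sum_congr rfl h2]
  have h3 : ∑ j ∈ Finset.range (6 - (i : ℕ)), fc ((i : ℕ) + 1 + j) • ((Rmat fc) ^ j).mulVec (red fc p)
      = ∑ j ∈ Finset.range 6, fc ((i : ℕ) + 1 + j) • ((Rmat fc) ^ j).mulVec (red fc p) := by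
    apply Finset.sum_subset
    · exact Finset.range_subset_range.2 (by omega)
    · intro j _ hj
      simp only [Finset.mem_range, not_lt] at hj
      rw [hdeg ((i : ℕ) + 1 + j) (by omega), zero_smul]
  rw [h3, Sg, sum_smul_mulVec, ← Fin.sum_univ_eq_sum_range
    (fun j => fc ((i : ℕ) + 1 + j) • ((Rmat fc) ^ j).mulVec (red fc p)) 6]

lemma red_delta_mul (hdeg : ∀ m, 7 ≤ m → fc m = 0) (hf6 : fc 6 ≠ 0) (d : Fin 6 → k)
    (p : Polynomial k) :
    red fc (deltaPoly d * p) = (Dmat fc d).mulVec (red fc p) := by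
  have h1 : deltaPoly d * p = ∑ m : Fin 6, C (d m) * (X ^ (m : ℕ) * p) := by
    rw [deltaPoly, Finset.sum_mul]
    exact Finset.sum_congr rfl fun m _ => by ring
  rw [h1, red_sum, Dmat, sum_smul_mulVec]
  exact Finset.sum_congr rfl fun m _ => by rw [red_smul, red_Xpow_mul fc hdeg hf6]

lemma red_xi_mul (hdeg : ∀ m, 7 ≤ m → fc m = 0) (hf6 : fc 6 ≠ 0) (w : Fin 6 → k)
    (p : Polynomial k) :
    red fc (xiPoly fc w * p) = (∑ i : Fin 6, w i • Sg fc i).mulVec (red fc p) := by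
  have h1 : xiPoly fc w * p = ∑ i : Fin 6, C (w i) * (gPoly fc i * p) := by
    rw [xiPoly, Finset.sum_mul]
    exact Finset.sum_congr rfl fun i _ => by ring
  rw [h1, red_sum, sum_smul_mulVec]
  exact Finset.sum_congr rfl fun i _ => by rw [red_smul, red_g_mul fc hdeg hf6]

lemma g_degree (i : Fin 6) : (gPoly fc i).degree ≤ 5 := by
  refine le_trans (degree_sum_le _ _) ?_
  rw [Finset.sup_le_iff]
  intro j hj
  simp only [Finset.mem_range] at hj
  refine le_trans (degree_C_mul_X_pow_le _ _) ?_
  exact_mod_cast (by omega : j ≤ 5)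

lemma g_coeff (hdeg : ∀ m, 7 ≤ m → fc m = 0) (i : Fin 6) (n : ℕ) (hn : n < 6) :
    (gPoly fc i).coeff n = fc ((i : ℕ) + 1 + n) := by
  rw [gPoly, finset_sum_coeff]
  simp only [coeff_C_mul, coeff_X_pow]
  by_cases h : n < 6 - (i : ℕ)
  · rw [Finset.sum_eq_single n]
    · simp
    · intro b _ hb; simp [Ne.symm hb]
    · simp [h]
  · rw [Finset.sum_eq_zero, (hdeg ((i : ℕ) + 1 + n) (by omega)).symm]
    intro b hb
    simp only [Finset.mem_range] at hb
    have : ¬ (n = b) := by omega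
    simp [this]

lemma red_g (hdeg : ∀ m, 7 ≤ m → fc m = 0) (hf6 : fc 6 ≠ 0) (i : Fin 6) :
    red fc (gPoly fc i) = (Tmat fc).mulVec (Pi.single i 1) := by
  funext j
  rw [red_of_degree_le fc hdeg hf6 (g_degree fc i), g_coeff fc hdeg i j j.isLt,
    Matrix.mulVec_single_one]
  simp only [Tmat, Matrix.col_apply, Matrix.of_apply, mul_one]
  congr 1
  omega

lemma red_Xpow_single (hdeg : ∀ m, 7 ≤ m → fc m = 0) (hf6 : fc 6 ≠ 0) (b : Fin 6) :
    red fc (X ^ (b : ℕ)) = Pi.single b 1 := by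
  funext j
  have hdegX : (X ^ (b : ℕ) : Polynomial k).degree ≤ 5 :=
    le_trans (degree_X_pow_le _) (by exact_mod_cast (by omega : (b:ℕ) ≤ 5))
  rw [red_of_degree_le fc hdeg hf6 hdegX, coeff_X_pow, Pi.single_apply]
  by_cases h : j = b
  · simp [h]
  · have h2 : ¬((j : ℕ) = (b : ℕ)) := fun hh => h (Fin.ext hh)
    simp [h, h2]

lemma Sg_apply (hdeg : ∀ m, 7 ≤ m → fc m = 0) (hf6 : fc 6 ≠ 0) (i j b : Fin 6) :
    Sg fc i j b = ((Rmat fc) ^ (b : ℕ) * Tmat fc) j i := by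
  have h1 : (Sg fc i).mulVec (Pi.single b 1) = red fc (gPoly fc i * X ^ (b : ℕ)) := by
    rw [red_g_mul fc hdeg hf6, red_Xpow_single fc hdeg hf6]
  have h2 : red fc (gPoly fc i * X ^ (b : ℕ))
      = ((Rmat fc) ^ (b : ℕ) * Tmat fc).mulVec (Pi.single i 1) := by
    rw [mul_comm, red_Xpow_mul fc hdeg hf6, red_g fc hdeg hf6, Matrix.mulVec_mulVec]
  have := congrFun (h1.trans h2) j
  rw [Matrix.mulVec_single_one, Matrix.mulVec_single_one] at this
  simpa using this

lemma Sg_symm (hdeg : ∀ m, 7 ≤ m → fc m = 0) (hf6 : fc 6 ≠ 0) (i j b : Fin 6) :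
    Sg fc i j b = Sg fc j i b := by
  rw [Sg_apply fc hdeg hf6, Sg_apply fc hdeg hf6, RnT_symm fc hdeg hf6]

lemma Dmat_Sg_comm (d : Fin 6 → k) (i : Fin 6) :
    Dmat fc d * Sg fc i = Sg fc i * Dmat fc d := by
  have key : ∀ (a b : k) (p q : ℕ), (a • (Rmat fc) ^ p) * (b • (Rmat fc) ^ q)
      = (b • (Rmat fc) ^ q) * (a • (Rmat fc) ^ p) := by
    intro a b p q
    rw [Matrix.smul_mul, Matrix.mul_smul, Matrix.smul_mul, Matrix.mul_smul,
      smul_comm, ← pow_add, ← pow_add, add_comm]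
  rw [Dmat, Sg, Finset.sum_mul_sum, Finset.sum_mul_sum, Finset.sum_comm]
  exact Finset.sum_congr rfl fun m _ => Finset.sum_congr rfl fun n _ => key _ _ _ _

lemma dot_sum {α : Type*} (s : Finset α) (v : Fin 6 → k) (F : α → (Fin 6 → k)) :
    v ⬝ᵥ (∑ m ∈ s, F m) = ∑ m ∈ s, v ⬝ᵥ F m := by
  simp only [dotProduct, Finset.sum_apply, Finset.mul_sum]
  rw [Finset.sum_comm]

lemma key_entry (hdeg : ∀ m, 7 ≤ m → fc m = 0) (hf6 : fc 6 ≠ 0) (d : Fin 6 → k)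
    (i j b : Fin 6) :
    (Dmat fc d * (Sg fc i * Tmat fc)) j b = (Dmat fc d * (Sg fc j * Tmat fc)) i b := by
  have e : ∀ a : Fin 6, Dmat fc d * (Sg fc a * Tmat fc) = Sg fc a * (Dmat fc d * Tmat fc) := by
    intro a
    rw [← mul_assoc, Dmat_Sg_comm, mul_assoc]
  rw [e i, e j, Matrix.mul_apply, Matrix.mul_apply]
  exact Finset.sum_congr rfl fun c _ => by rw [Sg_symm fc hdeg hf6]

lemma xi_degree (w : Fin 6 → k) : (xiPoly fc w).degree ≤ 5 := by
  refine le_trans (degree_sum_le _ _) ?_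
  rw [Finset.sup_le_iff]
  intro i _
  refine le_trans (degree_mul_le _ _) ?_
  refine le_trans (add_le_add degree_C_le (g_degree fc i)) ?_
  simp

lemma red_xi (hdeg : ∀ m, 7 ≤ m → fc m = 0) (hf6 : fc 6 ≠ 0) (w : Fin 6 → k) :
    red fc (xiPoly fc w) = (Tmat fc).mulVec w := by
  funext jj
  rw [red_of_degree_le fc hdeg hf6 (xi_degree fc w), xiPoly, finset_sum_coeff]
  simp only [coeff_C_mul]
  rw [Matrix.mulVec, dotProduct]
  refine Finset.sum_congr rfl fun i _ => ?_
  rw [g_coeff fc hdeg i jj jj.isLt, mul_comm]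
  simp only [Tmat, Matrix.of_apply]
  congr 2
  omega

end CQaux

end

/-- For every `ξ ∈ L` (with coordinate vector `w`) and every `0 ≤ j ≤ 5`, one has
`f₆·C_j^{(δ)}(ξ) = ∑_{i=0}^{5} f_{i+j+1}·Q_i^{(δ)}(ξ)`, where `C_j^{(δ)}(ξ)` is the
`X^j`-coefficient of the unique representative `P` of `δξ²` in `k[X]` of degree ≤ 5. -/
theorem C_in_terms_of_Q {k : Type*} [Field k] (fc : ℕ → k)
    (hdeg : ∀ m, 7 ≤ m → fc m = 0) (hf6 : fc 6 ≠ 0)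
    (d : Fin 6 → k) (w : Fin 6 → k)
    (P : Polynomial k) (hPdeg : P.degree ≤ 5)
    (hP : AdjoinRoot.mk (sexticPoly fc) P =
      AdjoinRoot.mk (sexticPoly fc) (deltaPoly d) *
        AdjoinRoot.mk (sexticPoly fc) (xiPoly fc w) ^ 2) :
    ∀ j : ℕ, j ≤ 5 →
      fc 6 * P.coeff j = ∑ i ∈ Finset.range 6, fc (i + j + 1) * Qform fc d i w := by
  intro j hj
  classical
  set R := Rmat fc with hR
  set T := Tmat fc with hT
  set D := CQaux.Dmat fc d with hD
  -- divisibility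
  have hfm_dvd : CQaux.fm fc ∣ P - deltaPoly d * xiPoly fc w ^ 2 := by
    have h1 : sexticPoly fc ∣ P - deltaPoly d * xiPoly fc w ^ 2 := by
      refine (AdjoinRoot.mk_eq_mk).1 ?_
      rw [hP, _root_.map_mul, _root_.map_pow]
    have h2 : CQaux.fm fc ∣ sexticPoly fc := by
      refine ⟨C (fc 6), ?_⟩
      rw [CQaux.fm, mul_comm (C (fc 6)⁻¹) (sexticPoly fc), mul_assoc, ← C_mul,
        inv_mul_cancel₀ hf6, C_1, mul_one]
    exact dvd_trans h2 h1
  have hred : CQaux.red fc P = CQaux.red fc (deltaPoly d * (xiPoly fc w * xiPoly fc w)) := by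
    have hsq : deltaPoly d * xiPoly fc w ^ 2 = deltaPoly d * (xiPoly fc w * xiPoly fc w) := by
      ring
    rw [← hsq]
    exact CQaux.red_congr fc hdeg hf6 hfm_dvd
  -- coefficient vector of P
  set M : Matrix (Fin 6) (Fin 6) k := ∑ i : Fin 6, w i • CQaux.Sg fc i with hM
  have hP_eq : ∀ b : Fin 6, P.coeff (b : ℕ) = ((D * (M * T)).mulVec w) b := by
    intro b
    have h0 : P.coeff (b : ℕ) = CQaux.red fc P b :=
      (CQaux.red_of_degree_le fc hdeg hf6 hPdeg b).symm
    rw [h0, hred, CQaux.red_delta_mul fc hdeg hf6, CQaux.red_xi_mul fc hdeg hf6,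
      CQaux.red_xi fc hdeg hf6, Matrix.mulVec_mulVec, Matrix.mulVec_mulVec, ← hD, ← hM,
      mul_assoc]
  -- Qform in terms of D
  have hQ : ∀ i : ℕ, Qform fc d i w = fc 6 * (w ⬝ᵥ (D * (R ^ i * T)).mulVec w) := by
    intro i
    have hQmat : Qmat fc d i = fc 6 • (D * (R ^ i * T)) := by
      rw [Qmat, hD, CQaux.Dmat, Finset.sum_mul, Finset.smul_sum]
      refine Finset.sum_congr rfl fun m _ => ?_
      rw [Matrix.smul_mul, smul_smul, ← mul_assoc, ← pow_add, ← hR]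
    rw [Qform, hQmat, Matrix.smul_mulVec, dotProduct_smul, smul_eq_mul]
  rw [Finset.sum_congr rfl (fun i _ => by rw [hQ i])]
  have hfactor : ∑ i ∈ Finset.range 6, fc (i + j + 1) * (fc 6 * (w ⬝ᵥ (D * (R ^ i * T)).mulVec w))
      = fc 6 * ∑ i ∈ Finset.range 6, fc (i + j + 1) * (w ⬝ᵥ (D * (R ^ i * T)).mulVec w) := by
    rw [Finset.mul_sum]
    exact Finset.sum_congr rfl fun i _ => by ring
  rw [hfactor]
  congr 1
  -- now prove P.coeff j = ∑ ...
  set jF : Fin 6 := ⟨j, by omega⟩ with hjF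
  have hjFv : (jF : ℕ) = j := rfl
  -- RHS as a single matrix expression
  have hRHS : ∑ i ∈ Finset.range 6, fc (i + j + 1) * (w ⬝ᵥ (D * (R ^ i * T)).mulVec w)
      = w ⬝ᵥ (D * (CQaux.Sg fc jF * T)).mulVec w := by
    rw [← Fin.sum_univ_eq_sum_range (fun i => fc (i + j + 1) * (w ⬝ᵥ (D * (R ^ i * T)).mulVec w)) 6]
    have hSgT : D * (CQaux.Sg fc jF * T)
        = ∑ i : Fin 6, fc ((i : ℕ) + j + 1) • (D * (R ^ (i : ℕ) * T)) := by
      rw [CQaux.Sg, Finset.sum_mul, Finset.mul_sum]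
      refine Finset.sum_congr rfl fun i _ => ?_
      rw [Matrix.smul_mul, Matrix.mul_smul, ← hR]
      congr 2
      omega
    rw [hSgT, CQaux.sum_smul_mulVec]
    rw [CQaux.dot_sum]
    exact Finset.sum_congr rfl fun i _ => by rw [dotProduct_smul, smul_eq_mul]
  rw [hRHS]
  -- LHS
  have hLHS : P.coeff j = ((D * (M * T)).mulVec w) jF := hP_eq jF
  rw [hLHS]
  -- expand M
  have hDM : D * (M * T) = ∑ i : Fin 6, w i • (D * (CQaux.Sg fc i * T)) := by
    rw [hM, Finset.sum_mul, Finset.mul_sum]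
    exact Finset.sum_congr rfl fun i _ => by rw [Matrix.smul_mul, Matrix.mul_smul]
  rw [hDM, CQaux.sum_smul_mulVec]
  rw [Finset.sum_apply, dotProduct]
  refine Finset.sum_congr rfl fun i _ => ?_
  rw [Pi.smul_apply, smul_eq_mul]
  congr 1
  -- component identity via key_entry
  rw [Matrix.mulVec, Matrix.mulVec, dotProduct, dotProduct]
  exact Finset.sum_congr rfl fun b _ => by rw [CQaux.key_entry fc hdeg hf6 d i jF b]
end

section
/- If ξ ∈ L satisfies Q₀^{(δ)}(ξ) = Q₁^{(δ)}(ξ) = Q₂^{(δ)}(ξ) = 0, then C₃^{(δ)}(ξ) = C₄^{(δ)}(ξ) = C₅^{(δ)}(ξ) = 0 — that is, the unique representative of δξ² of degree ≤ 5 actually has degree ≤ 2 — and moreover C₂^{(δ)}(ξ) = Q₃^{(δ)}(ξ) and f₆C₁^{(δ)}(ξ) = f₅Q₃^{(δ)}(ξ) + f₆Q₄^{(δ)}(ξ). -/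
open Polynomial Matrix

noncomputable section AuxRQ
namespace AuxRQ
open Polynomial Matrix
variable {k : Type*} [Field k]

def phi (c : Fin 6 → k) : Polynomial k := ∑ i : Fin 6, C (c i) * X ^ (i : ℕ)

def ftil (fc : ℕ → k) : Polynomial k := C (fc 6)⁻¹ * sexticPoly fc

def ell (fc : ℕ → k) (p : Polynomial k) : k := (p %ₘ ftil fc).coeff 5

variable {fc : ℕ → k}

lemma sextic_coeff6 : (sexticPoly fc).coeff 6 = fc 6 := by
  simp [sexticPoly, Finset.sum_range_succ, coeff_add, coeff_C_mul, coeff_X_pow]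

lemma sextic_degree_le : (sexticPoly fc).degree ≤ 6 := by
  apply Polynomial.degree_sum_le _ _ |>.trans
  apply Finset.sup_le
  intro i hi
  exact (degree_C_mul_X_pow_le _ _).trans
    (by exact_mod_cast Nat.lt_succ_iff.mp (Finset.mem_range.mp hi))

lemma monic_ftil (hf6 : fc 6 ≠ 0) : (ftil fc).Monic := by
  have hd : (sexticPoly fc).degree = 6 :=
    le_antisymm sextic_degree_le (le_degree_of_ne_zero (by rw [sextic_coeff6]; exact hf6))
  have : (sexticPoly fc).leadingCoeff = fc 6 := by
    rw [leadingCoeff, natDegree_eq_of_degree_eq_some hd, sextic_coeff6]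
  unfold ftil Monic
  rw [leadingCoeff_mul, leadingCoeff_C, this, inv_mul_cancel₀ hf6]

lemma ftil_degree (hf6 : fc 6 ≠ 0) : (ftil fc).degree = 6 := by
  have hd : (sexticPoly fc).degree = 6 :=
    le_antisymm sextic_degree_le (le_degree_of_ne_zero (by rw [sextic_coeff6]; exact hf6))
  rw [ftil, degree_C_mul (inv_ne_zero hf6), hd]

lemma phi_degree_le (c : Fin 6 → k) : (phi c).degree ≤ 5 := by
  apply Polynomial.degree_sum_le _ _ |>.trans
  apply Finset.sup_le
  intro i _
  exact (degree_C_mul_X_pow_le _ _).trans (by exact_mod_cast Nat.lt_succ_iff.mp i.isLt)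

lemma ell_phi (hf6 : fc 6 ≠ 0) (c : Fin 6 → k) : ell fc (phi c) = c 5 := by
  have h : phi c %ₘ ftil fc = phi c := by
    rw [Polynomial.modByMonic_eq_self_iff (monic_ftil hf6), ftil_degree hf6]
    exact lt_of_le_of_lt (phi_degree_le c) (by norm_num)
  rw [ell, h, phi, Fin.sum_univ_six]
  norm_num [coeff_X_pow, Fin.val_zero, Fin.val_one, show ((2:Fin 6):ℕ) = 2 from rfl, show ((3:Fin 6):ℕ) = 3 from rfl,
    show ((4:Fin 6):ℕ) = 4 from rfl, show ((5:Fin 6):ℕ) = 5 from rfl]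

lemma ell_congr (hf6 : fc 6 ≠ 0) {p q : Polynomial k} (h : sexticPoly fc ∣ p - q) :
    ell fc p = ell fc q := by
  have h2 : ftil fc ∣ p - q := dvd_trans
    ⟨C (fc 6), by rw [ftil, mul_right_comm, ← C_mul, inv_mul_cancel₀ hf6, C_1, one_mul]⟩ h
  have h3 : (p - q) %ₘ ftil fc = 0 :=
    (Polynomial.modByMonic_eq_zero_iff_dvd (monic_ftil hf6)).2 h2
  rw [Polynomial.sub_modByMonic, sub_eq_zero] at h3
  unfold ell
  rw [h3]

lemma ell_add (p q : Polynomial k) : ell fc (p + q) = ell fc p + ell fc q := by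
  unfold ell; rw [Polynomial.add_modByMonic, coeff_add]

lemma ell_C_mul (a : k) (p : Polynomial k) : ell fc (C a * p) = a * ell fc p := by
  unfold ell
  rw [← smul_eq_C_mul, Polynomial.smul_modByMonic, coeff_smul, smul_eq_mul]

lemma ell_sum {ι : Type*} (s : Finset ι) (p : ι → Polynomial k) :
    ell fc (∑ i ∈ s, p i) = ∑ i ∈ s, ell fc (p i) := by
  classical
  induction s using Finset.induction_on with
  | empty => simp [ell, Polynomial.zero_modByMonic]
  | insert a s' hx ih => rw [Finset.sum_insert hx, ell_add, ih, Finset.sum_insert hx]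

lemma phi_explicit (c0 c1 c2 c3 c4 c5 : k) :
    phi ![c0, c1, c2, c3, c4, c5]
      = C c0 + C c1 * X + C c2 * X ^ 2 + C c3 * X ^ 3 + C c4 * X ^ 4 + C c5 * X ^ 5 := by
  rw [phi, Fin.sum_univ_six]
  norm_num [show ((2:Fin 6):ℕ) = 2 from rfl, show ((3:Fin 6):ℕ) = 3 from rfl,
    show ((4:Fin 6):ℕ) = 4 from rfl, show ((5:Fin 6):ℕ) = 5 from rfl,
    show (![c0, c1, c2, c3, c4, c5] : Fin 6 → k) 0 = c0 from rfl,
    show (![c0, c1, c2, c3, c4, c5] : Fin 6 → k) 1 = c1 from rfl,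
    show (![c0, c1, c2, c3, c4, c5] : Fin 6 → k) 2 = c2 from rfl,
    show (![c0, c1, c2, c3, c4, c5] : Fin 6 → k) 3 = c3 from rfl,
    show (![c0, c1, c2, c3, c4, c5] : Fin 6 → k) 4 = c4 from rfl,
    show (![c0, c1, c2, c3, c4, c5] : Fin 6 → k) 5 = c5 from rfl]

lemma ell_eq_of (hf6 : fc 6 ≠ 0) {p : Polynomial k} (c0 c1 c2 c3 c4 c5 : k) (q : Polynomial k)
    (h : p = C c0 + C c1 * X + C c2 * X ^ 2 + C c3 * X ^ 3 + C c4 * X ^ 4 + C c5 * X ^ 5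
        + q * sexticPoly fc) :
    ell fc p = c5 := by
  rw [ell_congr hf6 (show sexticPoly fc ∣ p - phi ![c0, c1, c2, c3, c4, c5] from
    ⟨q, by rw [h, phi_explicit]; ring⟩), ell_phi hf6]
  rfl

lemma phiR (hf6 : fc 6 ≠ 0) (c : Fin 6 → k) :
    X * phi c - phi ((Rmat fc).mulVec c) = C (c 5 * (fc 6)⁻¹) * sexticPoly fc := by
  have hC : (C ((fc 6)⁻¹) : Polynomial k) * C (fc 6) = 1 := by
    rw [← C_mul, inv_mul_cancel₀ hf6, C_1]
  simp only [phi, Rmat, Matrix.mulVec, dotProduct, Fin.sum_univ_six, Matrix.of_apply,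
    sexticPoly, Finset.sum_range_succ, Finset.sum_range_zero,
    Fin.val_zero, Fin.val_one, show ((2:Fin 6):ℕ) = 2 from rfl, show ((3:Fin 6):ℕ) = 3 from rfl,
    show ((4:Fin 6):ℕ) = 4 from rfl, show ((5:Fin 6):ℕ) = 5 from rfl,
    div_eq_mul_inv, neg_mul, map_add, _root_.map_mul, map_neg, _root_.map_one, map_zero]
  norm_num
  linear_combination (-(C (c 5) * X ^ 6)) * hC

lemma phi_pow_dvd (hf6 : fc 6 ≠ 0) (m : ℕ) (c : Fin 6 → k) :
    sexticPoly fc ∣ X ^ m * phi c - phi ((Rmat fc ^ m).mulVec c) := by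
  induction m generalizing c with
  | zero => simp [Matrix.one_mulVec]
  | succ n ih =>
    have e : X ^ (n + 1) * phi c - phi ((Rmat fc ^ (n + 1)).mulVec c)
        = X ^ n * (X * phi c - phi ((Rmat fc).mulVec c))
          + (X ^ n * phi ((Rmat fc).mulVec c)
            - phi ((Rmat fc ^ n).mulVec ((Rmat fc).mulVec c))) := by
      rw [Matrix.mulVec_mulVec, ← pow_succ]
      ring
    rw [e]
    exact dvd_add (by rw [phiR hf6]; exact (dvd_mul_left _ _).mul_left _) (ih _)

lemma Tw (hdeg : ∀ m, 7 ≤ m → fc m = 0) (w : Fin 6 → k) :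
    phi ((Tmat fc).mulVec w) = xiPoly fc w := by
  have h7 := hdeg 7 le_rfl; have h8 := hdeg 8 (by norm_num); have h9 := hdeg 9 (by norm_num)
  have h10 := hdeg 10 (by norm_num); have h11 := hdeg 11 (by norm_num)
  simp only [phi, Tmat, Matrix.mulVec, dotProduct, Fin.sum_univ_six, Matrix.of_apply,
    xiPoly, gPoly, Finset.sum_range_succ, Finset.sum_range_zero,
    Fin.val_zero, Fin.val_one, show ((2:Fin 6):ℕ) = 2 from rfl, show ((3:Fin 6):ℕ) = 3 from rfl,
    show ((4:Fin 6):ℕ) = 4 from rfl, show ((5:Fin 6):ℕ) = 5 from rfl,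
    map_add, _root_.map_mul]
  norm_num [h7, h8, h9, h10, h11]
  ring

lemma phi_of_deg_le {P : Polynomial k} (hP : P.degree ≤ 5) :
    phi (fun i : Fin 6 => P.coeff (i : ℕ)) = P := by
  ext n
  rcases lt_or_ge n 6 with h | h
  · rw [phi, Fin.sum_univ_six]
    interval_cases n <;>
      norm_num [coeff_X_pow, Fin.val_zero, Fin.val_one, show ((2:Fin 6):ℕ) = 2 from rfl, show ((3:Fin 6):ℕ) = 3 from rfl,
    show ((4:Fin 6):ℕ) = 4 from rfl, show ((5:Fin 6):ℕ) = 5 from rfl]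
  · have h1 : (phi fun i : Fin 6 => P.coeff (i : ℕ)).coeff n = 0 := by
      apply coeff_eq_zero_of_degree_lt
      exact lt_of_le_of_lt (phi_degree_le _) (by exact_mod_cast lt_of_lt_of_le (by norm_num) (show (6:ℕ) ≤ n from h))
    rw [h1, (coeff_eq_zero_of_degree_lt (lt_of_le_of_lt hP (by exact_mod_cast lt_of_lt_of_le (by norm_num) (show (6:ℕ) ≤ n from h)))).symm]

lemma ell_gb (hf6 : fc 6 ≠ 0) (hdeg : ∀ m, 7 ≤ m → fc m = 0) (a b : Fin 6) :
    ell fc (gPoly fc a * X ^ (b : ℕ)) = fc 6 * (if a = b then 1 else 0) := by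
  fin_cases a <;> fin_cases b
  · rw [ell_eq_of hf6 (fc 1) (fc 2) (fc 3) (fc 4) (fc 5) (fc 6) (0 : Polynomial k) (by
      simp only [gPoly, sexticPoly, Finset.sum_range_succ, Finset.sum_range_zero,
        Fin.val_zero, Fin.val_one, show ((2:Fin 6):ℕ) = 2 from rfl, show ((3:Fin 6):ℕ) = 3 from rfl, show ((4:Fin 6):ℕ) = 4 from rfl, show ((5:Fin 6):ℕ) = 5 from rfl,
        C_0, C_neg]
      push_cast
      ring)]
    norm_num [Fin.ext_iff]
  · rw [ell_eq_of hf6 (-fc 0) (0:k) (0:k) (0:k) (0:k) (0:k) (X ^ 0 : Polynomial k) (by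
      simp only [gPoly, sexticPoly, Finset.sum_range_succ, Finset.sum_range_zero,
        Fin.val_zero, Fin.val_one, show ((2:Fin 6):ℕ) = 2 from rfl, show ((3:Fin 6):ℕ) = 3 from rfl, show ((4:Fin 6):ℕ) = 4 from rfl, show ((5:Fin 6):ℕ) = 5 from rfl,
        C_0, C_neg]
      push_cast
      ring)]
    norm_num [Fin.ext_iff]
  · rw [ell_eq_of hf6 (0:k) (-fc 0) (0:k) (0:k) (0:k) (0:k) (X ^ 1 : Polynomial k) (by
      simp only [gPoly, sexticPoly, Finset.sum_range_succ, Finset.sum_range_zero,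
        Fin.val_zero, Fin.val_one, show ((2:Fin 6):ℕ) = 2 from rfl, show ((3:Fin 6):ℕ) = 3 from rfl, show ((4:Fin 6):ℕ) = 4 from rfl, show ((5:Fin 6):ℕ) = 5 from rfl,
        C_0, C_neg]
      push_cast
      ring)]
    norm_num [Fin.ext_iff]
  · rw [ell_eq_of hf6 (0:k) (0:k) (-fc 0) (0:k) (0:k) (0:k) (X ^ 2 : Polynomial k) (by
      simp only [gPoly, sexticPoly, Finset.sum_range_succ, Finset.sum_range_zero,
        Fin.val_zero, Fin.val_one, show ((2:Fin 6):ℕ) = 2 from rfl, show ((3:Fin 6):ℕ) = 3 from rfl, show ((4:Fin 6):ℕ) = 4 from rfl, show ((5:Fin 6):ℕ) = 5 from rfl,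
        C_0, C_neg]
      push_cast
      ring)]
    norm_num [Fin.ext_iff]
  · rw [ell_eq_of hf6 (0:k) (0:k) (0:k) (-fc 0) (0:k) (0:k) (X ^ 3 : Polynomial k) (by
      simp only [gPoly, sexticPoly, Finset.sum_range_succ, Finset.sum_range_zero,
        Fin.val_zero, Fin.val_one, show ((2:Fin 6):ℕ) = 2 from rfl, show ((3:Fin 6):ℕ) = 3 from rfl, show ((4:Fin 6):ℕ) = 4 from rfl, show ((5:Fin 6):ℕ) = 5 from rfl,
        C_0, C_neg]
      push_cast
      ring)]
    norm_num [Fin.ext_iff]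
  · rw [ell_eq_of hf6 (0:k) (0:k) (0:k) (0:k) (-fc 0) (0:k) (X ^ 4 : Polynomial k) (by
      simp only [gPoly, sexticPoly, Finset.sum_range_succ, Finset.sum_range_zero,
        Fin.val_zero, Fin.val_one, show ((2:Fin 6):ℕ) = 2 from rfl, show ((3:Fin 6):ℕ) = 3 from rfl, show ((4:Fin 6):ℕ) = 4 from rfl, show ((5:Fin 6):ℕ) = 5 from rfl,
        C_0, C_neg]
      push_cast
      ring)]
    norm_num [Fin.ext_iff]
  · rw [ell_eq_of hf6 (fc 2) (fc 3) (fc 4) (fc 5) (fc 6) (0:k) (0 : Polynomial k) (by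
      simp only [gPoly, sexticPoly, Finset.sum_range_succ, Finset.sum_range_zero,
        Fin.val_zero, Fin.val_one, show ((2:Fin 6):ℕ) = 2 from rfl, show ((3:Fin 6):ℕ) = 3 from rfl, show ((4:Fin 6):ℕ) = 4 from rfl, show ((5:Fin 6):ℕ) = 5 from rfl,
        C_0, C_neg]
      push_cast
      ring)]
    norm_num [Fin.ext_iff]
  · rw [ell_eq_of hf6 (0:k) (fc 2) (fc 3) (fc 4) (fc 5) (fc 6) (0 : Polynomial k) (by
      simp only [gPoly, sexticPoly, Finset.sum_range_succ, Finset.sum_range_zero,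
        Fin.val_zero, Fin.val_one, show ((2:Fin 6):ℕ) = 2 from rfl, show ((3:Fin 6):ℕ) = 3 from rfl, show ((4:Fin 6):ℕ) = 4 from rfl, show ((5:Fin 6):ℕ) = 5 from rfl,
        C_0, C_neg]
      push_cast
      ring)]
    norm_num [Fin.ext_iff]
  · rw [ell_eq_of hf6 (-fc 0) (-fc 1) (0:k) (0:k) (0:k) (0:k) (X ^ 0 : Polynomial k) (by
      simp only [gPoly, sexticPoly, Finset.sum_range_succ, Finset.sum_range_zero,
        Fin.val_zero, Fin.val_one, show ((2:Fin 6):ℕ) = 2 from rfl, show ((3:Fin 6):ℕ) = 3 from rfl, show ((4:Fin 6):ℕ) = 4 from rfl, show ((5:Fin 6):ℕ) = 5 from rfl,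
        C_0, C_neg]
      push_cast
      ring)]
    norm_num [Fin.ext_iff]
  · rw [ell_eq_of hf6 (0:k) (-fc 0) (-fc 1) (0:k) (0:k) (0:k) (X ^ 1 : Polynomial k) (by
      simp only [gPoly, sexticPoly, Finset.sum_range_succ, Finset.sum_range_zero,
        Fin.val_zero, Fin.val_one, show ((2:Fin 6):ℕ) = 2 from rfl, show ((3:Fin 6):ℕ) = 3 from rfl, show ((4:Fin 6):ℕ) = 4 from rfl, show ((5:Fin 6):ℕ) = 5 from rfl,
        C_0, C_neg]
      push_cast
      ring)]
    norm_num [Fin.ext_iff]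
  · rw [ell_eq_of hf6 (0:k) (0:k) (-fc 0) (-fc 1) (0:k) (0:k) (X ^ 2 : Polynomial k) (by
      simp only [gPoly, sexticPoly, Finset.sum_range_succ, Finset.sum_range_zero,
        Fin.val_zero, Fin.val_one, show ((2:Fin 6):ℕ) = 2 from rfl, show ((3:Fin 6):ℕ) = 3 from rfl, show ((4:Fin 6):ℕ) = 4 from rfl, show ((5:Fin 6):ℕ) = 5 from rfl,
        C_0, C_neg]
      push_cast
      ring)]
    norm_num [Fin.ext_iff]
  · rw [ell_eq_of hf6 (0:k) (0:k) (0:k) (-fc 0) (-fc 1) (0:k) (X ^ 3 : Polynomial k) (by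
      simp only [gPoly, sexticPoly, Finset.sum_range_succ, Finset.sum_range_zero,
        Fin.val_zero, Fin.val_one, show ((2:Fin 6):ℕ) = 2 from rfl, show ((3:Fin 6):ℕ) = 3 from rfl, show ((4:Fin 6):ℕ) = 4 from rfl, show ((5:Fin 6):ℕ) = 5 from rfl,
        C_0, C_neg]
      push_cast
      ring)]
    norm_num [Fin.ext_iff]
  · rw [ell_eq_of hf6 (fc 3) (fc 4) (fc 5) (fc 6) (0:k) (0:k) (0 : Polynomial k) (by
      simp only [gPoly, sexticPoly, Finset.sum_range_succ, Finset.sum_range_zero,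
        Fin.val_zero, Fin.val_one, show ((2:Fin 6):ℕ) = 2 from rfl, show ((3:Fin 6):ℕ) = 3 from rfl, show ((4:Fin 6):ℕ) = 4 from rfl, show ((5:Fin 6):ℕ) = 5 from rfl,
        C_0, C_neg]
      push_cast
      ring)]
    norm_num [Fin.ext_iff]
  · rw [ell_eq_of hf6 (0:k) (fc 3) (fc 4) (fc 5) (fc 6) (0:k) (0 : Polynomial k) (by
      simp only [gPoly, sexticPoly, Finset.sum_range_succ, Finset.sum_range_zero,
        Fin.val_zero, Fin.val_one, show ((2:Fin 6):ℕ) = 2 from rfl, show ((3:Fin 6):ℕ) = 3 from rfl, show ((4:Fin 6):ℕ) = 4 from rfl, show ((5:Fin 6):ℕ) = 5 from rfl,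
        C_0, C_neg]
      push_cast
      ring)]
    norm_num [Fin.ext_iff]
  · rw [ell_eq_of hf6 (0:k) (0:k) (fc 3) (fc 4) (fc 5) (fc 6) (0 : Polynomial k) (by
      simp only [gPoly, sexticPoly, Finset.sum_range_succ, Finset.sum_range_zero,
        Fin.val_zero, Fin.val_one, show ((2:Fin 6):ℕ) = 2 from rfl, show ((3:Fin 6):ℕ) = 3 from rfl, show ((4:Fin 6):ℕ) = 4 from rfl, show ((5:Fin 6):ℕ) = 5 from rfl,
        C_0, C_neg]
      push_cast
      ring)]
    norm_num [Fin.ext_iff]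
  · rw [ell_eq_of hf6 (-fc 0) (-fc 1) (-fc 2) (0:k) (0:k) (0:k) (X ^ 0 : Polynomial k) (by
      simp only [gPoly, sexticPoly, Finset.sum_range_succ, Finset.sum_range_zero,
        Fin.val_zero, Fin.val_one, show ((2:Fin 6):ℕ) = 2 from rfl, show ((3:Fin 6):ℕ) = 3 from rfl, show ((4:Fin 6):ℕ) = 4 from rfl, show ((5:Fin 6):ℕ) = 5 from rfl,
        C_0, C_neg]
      push_cast
      ring)]
    norm_num [Fin.ext_iff]
  · rw [ell_eq_of hf6 (0:k) (-fc 0) (-fc 1) (-fc 2) (0:k) (0:k) (X ^ 1 : Polynomial k) (by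
      simp only [gPoly, sexticPoly, Finset.sum_range_succ, Finset.sum_range_zero,
        Fin.val_zero, Fin.val_one, show ((2:Fin 6):ℕ) = 2 from rfl, show ((3:Fin 6):ℕ) = 3 from rfl, show ((4:Fin 6):ℕ) = 4 from rfl, show ((5:Fin 6):ℕ) = 5 from rfl,
        C_0, C_neg]
      push_cast
      ring)]
    norm_num [Fin.ext_iff]
  · rw [ell_eq_of hf6 (0:k) (0:k) (-fc 0) (-fc 1) (-fc 2) (0:k) (X ^ 2 : Polynomial k) (by
      simp only [gPoly, sexticPoly, Finset.sum_range_succ, Finset.sum_range_zero,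
        Fin.val_zero, Fin.val_one, show ((2:Fin 6):ℕ) = 2 from rfl, show ((3:Fin 6):ℕ) = 3 from rfl, show ((4:Fin 6):ℕ) = 4 from rfl, show ((5:Fin 6):ℕ) = 5 from rfl,
        C_0, C_neg]
      push_cast
      ring)]
    norm_num [Fin.ext_iff]
  · rw [ell_eq_of hf6 (fc 4) (fc 5) (fc 6) (0:k) (0:k) (0:k) (0 : Polynomial k) (by
      simp only [gPoly, sexticPoly, Finset.sum_range_succ, Finset.sum_range_zero,
        Fin.val_zero, Fin.val_one, show ((2:Fin 6):ℕ) = 2 from rfl, show ((3:Fin 6):ℕ) = 3 from rfl, show ((4:Fin 6):ℕ) = 4 from rfl, show ((5:Fin 6):ℕ) = 5 from rfl,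
        C_0, C_neg]
      push_cast
      ring)]
    norm_num [Fin.ext_iff]
  · rw [ell_eq_of hf6 (0:k) (fc 4) (fc 5) (fc 6) (0:k) (0:k) (0 : Polynomial k) (by
      simp only [gPoly, sexticPoly, Finset.sum_range_succ, Finset.sum_range_zero,
        Fin.val_zero, Fin.val_one, show ((2:Fin 6):ℕ) = 2 from rfl, show ((3:Fin 6):ℕ) = 3 from rfl, show ((4:Fin 6):ℕ) = 4 from rfl, show ((5:Fin 6):ℕ) = 5 from rfl,
        C_0, C_neg]
      push_cast
      ring)]
    norm_num [Fin.ext_iff]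
  · rw [ell_eq_of hf6 (0:k) (0:k) (fc 4) (fc 5) (fc 6) (0:k) (0 : Polynomial k) (by
      simp only [gPoly, sexticPoly, Finset.sum_range_succ, Finset.sum_range_zero,
        Fin.val_zero, Fin.val_one, show ((2:Fin 6):ℕ) = 2 from rfl, show ((3:Fin 6):ℕ) = 3 from rfl, show ((4:Fin 6):ℕ) = 4 from rfl, show ((5:Fin 6):ℕ) = 5 from rfl,
        C_0, C_neg]
      push_cast
      ring)]
    norm_num [Fin.ext_iff]
  · rw [ell_eq_of hf6 (0:k) (0:k) (0:k) (fc 4) (fc 5) (fc 6) (0 : Polynomial k) (by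
      simp only [gPoly, sexticPoly, Finset.sum_range_succ, Finset.sum_range_zero,
        Fin.val_zero, Fin.val_one, show ((2:Fin 6):ℕ) = 2 from rfl, show ((3:Fin 6):ℕ) = 3 from rfl, show ((4:Fin 6):ℕ) = 4 from rfl, show ((5:Fin 6):ℕ) = 5 from rfl,
        C_0, C_neg]
      push_cast
      ring)]
    norm_num [Fin.ext_iff]
  · rw [ell_eq_of hf6 (-fc 0) (-fc 1) (-fc 2) (-fc 3) (0:k) (0:k) (X ^ 0 : Polynomial k) (by
      simp only [gPoly, sexticPoly, Finset.sum_range_succ, Finset.sum_range_zero,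
        Fin.val_zero, Fin.val_one, show ((2:Fin 6):ℕ) = 2 from rfl, show ((3:Fin 6):ℕ) = 3 from rfl, show ((4:Fin 6):ℕ) = 4 from rfl, show ((5:Fin 6):ℕ) = 5 from rfl,
        C_0, C_neg]
      push_cast
      ring)]
    norm_num [Fin.ext_iff]
  · rw [ell_eq_of hf6 (0:k) (-fc 0) (-fc 1) (-fc 2) (-fc 3) (0:k) (X ^ 1 : Polynomial k) (by
      simp only [gPoly, sexticPoly, Finset.sum_range_succ, Finset.sum_range_zero,
        Fin.val_zero, Fin.val_one, show ((2:Fin 6):ℕ) = 2 from rfl, show ((3:Fin 6):ℕ) = 3 from rfl, show ((4:Fin 6):ℕ) = 4 from rfl, show ((5:Fin 6):ℕ) = 5 from rfl,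
        C_0, C_neg]
      push_cast
      ring)]
    norm_num [Fin.ext_iff]
  · rw [ell_eq_of hf6 (fc 5) (fc 6) (0:k) (0:k) (0:k) (0:k) (0 : Polynomial k) (by
      simp only [gPoly, sexticPoly, Finset.sum_range_succ, Finset.sum_range_zero,
        Fin.val_zero, Fin.val_one, show ((2:Fin 6):ℕ) = 2 from rfl, show ((3:Fin 6):ℕ) = 3 from rfl, show ((4:Fin 6):ℕ) = 4 from rfl, show ((5:Fin 6):ℕ) = 5 from rfl,
        C_0, C_neg]
      push_cast
      ring)]
    norm_num [Fin.ext_iff]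
  · rw [ell_eq_of hf6 (0:k) (fc 5) (fc 6) (0:k) (0:k) (0:k) (0 : Polynomial k) (by
      simp only [gPoly, sexticPoly, Finset.sum_range_succ, Finset.sum_range_zero,
        Fin.val_zero, Fin.val_one, show ((2:Fin 6):ℕ) = 2 from rfl, show ((3:Fin 6):ℕ) = 3 from rfl, show ((4:Fin 6):ℕ) = 4 from rfl, show ((5:Fin 6):ℕ) = 5 from rfl,
        C_0, C_neg]
      push_cast
      ring)]
    norm_num [Fin.ext_iff]
  · rw [ell_eq_of hf6 (0:k) (0:k) (fc 5) (fc 6) (0:k) (0:k) (0 : Polynomial k) (by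
      simp only [gPoly, sexticPoly, Finset.sum_range_succ, Finset.sum_range_zero,
        Fin.val_zero, Fin.val_one, show ((2:Fin 6):ℕ) = 2 from rfl, show ((3:Fin 6):ℕ) = 3 from rfl, show ((4:Fin 6):ℕ) = 4 from rfl, show ((5:Fin 6):ℕ) = 5 from rfl,
        C_0, C_neg]
      push_cast
      ring)]
    norm_num [Fin.ext_iff]
  · rw [ell_eq_of hf6 (0:k) (0:k) (0:k) (fc 5) (fc 6) (0:k) (0 : Polynomial k) (by
      simp only [gPoly, sexticPoly, Finset.sum_range_succ, Finset.sum_range_zero,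
        Fin.val_zero, Fin.val_one, show ((2:Fin 6):ℕ) = 2 from rfl, show ((3:Fin 6):ℕ) = 3 from rfl, show ((4:Fin 6):ℕ) = 4 from rfl, show ((5:Fin 6):ℕ) = 5 from rfl,
        C_0, C_neg]
      push_cast
      ring)]
    norm_num [Fin.ext_iff]
  · rw [ell_eq_of hf6 (0:k) (0:k) (0:k) (0:k) (fc 5) (fc 6) (0 : Polynomial k) (by
      simp only [gPoly, sexticPoly, Finset.sum_range_succ, Finset.sum_range_zero,
        Fin.val_zero, Fin.val_one, show ((2:Fin 6):ℕ) = 2 from rfl, show ((3:Fin 6):ℕ) = 3 from rfl, show ((4:Fin 6):ℕ) = 4 from rfl, show ((5:Fin 6):ℕ) = 5 from rfl,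
        C_0, C_neg]
      push_cast
      ring)]
    norm_num [Fin.ext_iff]
  · rw [ell_eq_of hf6 (-fc 0) (-fc 1) (-fc 2) (-fc 3) (-fc 4) (0:k) (X ^ 0 : Polynomial k) (by
      simp only [gPoly, sexticPoly, Finset.sum_range_succ, Finset.sum_range_zero,
        Fin.val_zero, Fin.val_one, show ((2:Fin 6):ℕ) = 2 from rfl, show ((3:Fin 6):ℕ) = 3 from rfl, show ((4:Fin 6):ℕ) = 4 from rfl, show ((5:Fin 6):ℕ) = 5 from rfl,
        C_0, C_neg]
      push_cast
      ring)]
    norm_num [Fin.ext_iff]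
  · rw [ell_eq_of hf6 (fc 6) (0:k) (0:k) (0:k) (0:k) (0:k) (0 : Polynomial k) (by
      simp only [gPoly, sexticPoly, Finset.sum_range_succ, Finset.sum_range_zero,
        Fin.val_zero, Fin.val_one, show ((2:Fin 6):ℕ) = 2 from rfl, show ((3:Fin 6):ℕ) = 3 from rfl, show ((4:Fin 6):ℕ) = 4 from rfl, show ((5:Fin 6):ℕ) = 5 from rfl,
        C_0, C_neg]
      push_cast
      ring)]
    norm_num [Fin.ext_iff]
  · rw [ell_eq_of hf6 (0:k) (fc 6) (0:k) (0:k) (0:k) (0:k) (0 : Polynomial k) (by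
      simp only [gPoly, sexticPoly, Finset.sum_range_succ, Finset.sum_range_zero,
        Fin.val_zero, Fin.val_one, show ((2:Fin 6):ℕ) = 2 from rfl, show ((3:Fin 6):ℕ) = 3 from rfl, show ((4:Fin 6):ℕ) = 4 from rfl, show ((5:Fin 6):ℕ) = 5 from rfl,
        C_0, C_neg]
      push_cast
      ring)]
    norm_num [Fin.ext_iff]
  · rw [ell_eq_of hf6 (0:k) (0:k) (fc 6) (0:k) (0:k) (0:k) (0 : Polynomial k) (by
      simp only [gPoly, sexticPoly, Finset.sum_range_succ, Finset.sum_range_zero,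
        Fin.val_zero, Fin.val_one, show ((2:Fin 6):ℕ) = 2 from rfl, show ((3:Fin 6):ℕ) = 3 from rfl, show ((4:Fin 6):ℕ) = 4 from rfl, show ((5:Fin 6):ℕ) = 5 from rfl,
        C_0, C_neg]
      push_cast
      ring)]
    norm_num [Fin.ext_iff]
  · rw [ell_eq_of hf6 (0:k) (0:k) (0:k) (fc 6) (0:k) (0:k) (0 : Polynomial k) (by
      simp only [gPoly, sexticPoly, Finset.sum_range_succ, Finset.sum_range_zero,
        Fin.val_zero, Fin.val_one, show ((2:Fin 6):ℕ) = 2 from rfl, show ((3:Fin 6):ℕ) = 3 from rfl, show ((4:Fin 6):ℕ) = 4 from rfl, show ((5:Fin 6):ℕ) = 5 from rfl,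
        C_0, C_neg]
      push_cast
      ring)]
    norm_num [Fin.ext_iff]
  · rw [ell_eq_of hf6 (0:k) (0:k) (0:k) (0:k) (fc 6) (0:k) (0 : Polynomial k) (by
      simp only [gPoly, sexticPoly, Finset.sum_range_succ, Finset.sum_range_zero,
        Fin.val_zero, Fin.val_one, show ((2:Fin 6):ℕ) = 2 from rfl, show ((3:Fin 6):ℕ) = 3 from rfl, show ((4:Fin 6):ℕ) = 4 from rfl, show ((5:Fin 6):ℕ) = 5 from rfl,
        C_0, C_neg]
      push_cast
      ring)]
    norm_num [Fin.ext_iff]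
  · rw [ell_eq_of hf6 (0:k) (0:k) (0:k) (0:k) (0:k) (fc 6) (0 : Polynomial k) (by
      simp only [gPoly, sexticPoly, Finset.sum_range_succ, Finset.sum_range_zero,
        Fin.val_zero, Fin.val_one, show ((2:Fin 6):ℕ) = 2 from rfl, show ((3:Fin 6):ℕ) = 3 from rfl, show ((4:Fin 6):ℕ) = 4 from rfl, show ((5:Fin 6):ℕ) = 5 from rfl,
        C_0, C_neg]
      push_cast
      ring)]
    norm_num [Fin.ext_iff]

lemma ell_xi_phi (hf6 : fc 6 ≠ 0) (hdeg : ∀ m, 7 ≤ m → fc m = 0) (w c : Fin 6 → k) :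
    ell fc (xiPoly fc w * phi c) = fc 6 * (w ⬝ᵥ c) := by
  have h1 : ∀ a : Fin 6, ell fc (C (w a) * gPoly fc a * phi c) = w a * (fc 6 * c a) := by
    intro a
    rw [mul_assoc, ell_C_mul]
    congr 1
    rw [show gPoly fc a * phi c = ∑ b : Fin 6, C (c b) * (gPoly fc a * X ^ (b : ℕ)) by
      rw [phi, Finset.mul_sum]; exact Finset.sum_congr rfl fun b _ => by ring]
    rw [ell_sum, Finset.sum_congr rfl fun b _ => by rw [ell_C_mul, ell_gb hf6 hdeg a b]]
    simp [mul_ite, Finset.sum_ite_eq, mul_comm]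
  rw [xiPoly, Finset.sum_mul, ell_sum, Finset.sum_congr rfl fun a _ => h1 a,
    dotProduct, Finset.mul_sum]
  exact Finset.sum_congr rfl fun a _ => by ring

end AuxRQ
end AuxRQ

open AuxRQ Polynomial Matrix in
/-- main -/
theorem representative_is_quadratic {k : Type*} [Field k] (fc : ℕ → k)
    (hdeg : ∀ m, 7 ≤ m → fc m = 0) (hf6 : fc 6 ≠ 0)
    (d : Fin 6 → k) (w : Fin 6 → k)
    (hQ0 : Qform fc d 0 w = 0) (hQ1 : Qform fc d 1 w = 0) (hQ2 : Qform fc d 2 w = 0)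
    (P : Polynomial k) (hPdeg : P.degree ≤ 5)
    (hP : AdjoinRoot.mk (sexticPoly fc) P =
      AdjoinRoot.mk (sexticPoly fc) (deltaPoly d) *
        AdjoinRoot.mk (sexticPoly fc) (xiPoly fc w) ^ 2) :
    P.coeff 3 = 0 ∧ P.coeff 4 = 0 ∧ P.coeff 5 = 0 ∧
      P.coeff 2 = Qform fc d 3 w ∧
      fc 6 * P.coeff 1 = fc 5 * Qform fc d 3 w + fc 6 * Qform fc d 4 w := by
  classical
  have hdvd : sexticPoly fc ∣ P - deltaPoly d * xiPoly fc w ^ 2 := by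
    rw [← AdjoinRoot.mk_eq_mk, hP, _root_.map_mul, map_pow]
  have key : ∀ m : ℕ, fc 6 * (w ⬝ᵥ (Rmat fc ^ m).mulVec ((Tmat fc).mulVec w))
      = ell fc (X ^ m * (xiPoly fc w * xiPoly fc w)) := by
    intro m
    rw [← ell_xi_phi hf6 hdeg w ((Rmat fc ^ m).mulVec ((Tmat fc).mulVec w))]
    apply ell_congr hf6
    have h2 : xiPoly fc w * phi ((Rmat fc ^ m).mulVec ((Tmat fc).mulVec w))
        - X ^ m * (xiPoly fc w * xiPoly fc w)
        = -(xiPoly fc w * (X ^ m * phi ((Tmat fc).mulVec w)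
            - phi ((Rmat fc ^ m).mulVec ((Tmat fc).mulVec w)))) := by
      rw [Tw hdeg w]; ring
    rw [h2]
    exact dvd_neg.mpr ((phi_pow_dvd hf6 m _).mul_left _)
  have hQell : ∀ j : ℕ, Qform fc d j w = ell fc (X ^ j * P) := by
    intro j
    have hmv : (∑ i : Fin 6, (fc 6 * d i) • (Rmat fc ^ ((i : ℕ) + j) * Tmat fc)).mulVec w
        = ∑ i : Fin 6, ((fc 6 * d i) • (Rmat fc ^ ((i : ℕ) + j) * Tmat fc)).mulVec w := by
      ext r
      simp only [Matrix.mulVec, dotProduct, Matrix.sum_apply, Finset.sum_mul, Finset.sum_apply]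
      rw [Finset.sum_comm]
    have hds : ∀ v : Fin 6 → Fin 6 → k, w ⬝ᵥ (∑ i : Fin 6, v i) = ∑ i : Fin 6, w ⬝ᵥ v i := by
      intro v
      simp only [dotProduct, Finset.sum_apply, Finset.mul_sum]
      exact Finset.sum_comm
    have e1 : Qform fc d j w
        = ∑ i : Fin 6, (fc 6 * d i)
            * (w ⬝ᵥ (Rmat fc ^ ((i : ℕ) + j)).mulVec ((Tmat fc).mulVec w)) := by
      rw [Qform, Qmat, hmv, hds]
      apply Finset.sum_congr rfl
      intro i _
      rw [Matrix.smul_mulVec, dotProduct_smul, smul_eq_mul, ← Matrix.mulVec_mulVec]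
    rw [e1, Finset.sum_congr rfl fun i _ => by
        rw [show (fc 6 * d i) * (w ⬝ᵥ (Rmat fc ^ ((i:ℕ)+j)).mulVec ((Tmat fc).mulVec w))
            = d i * (fc 6 * (w ⬝ᵥ (Rmat fc ^ ((i:ℕ)+j)).mulVec ((Tmat fc).mulVec w))) from by ring,
          key ((i:ℕ)+j), ← ell_C_mul]]
    rw [← ell_sum]
    have e3 : ∑ i : Fin 6, C (d i) * (X ^ ((i : ℕ) + j) * (xiPoly fc w * xiPoly fc w))
        = X ^ j * (deltaPoly d * xiPoly fc w ^ 2) := by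
      rw [deltaPoly, Finset.sum_mul, Finset.mul_sum]
      exact Finset.sum_congr rfl fun i _ => by rw [pow_add]; ring
    rw [e3]
    apply ell_congr hf6
    have e4 : X ^ j * (deltaPoly d * xiPoly fc w ^ 2) - X ^ j * P
        = -(X ^ j * (P - deltaPoly d * xiPoly fc w ^ 2)) := by ring
    rw [e4]
    exact dvd_neg.mpr (hdvd.mul_left _)
  set u : Fin 6 → k := fun i : Fin 6 => P.coeff (i : ℕ) with hu
  have hPu : phi u = P := phi_of_deg_le hPdeg
  have hQR : ∀ j : ℕ, Qform fc d j w = ((Rmat fc ^ j).mulVec u) 5 := by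
    intro j
    rw [hQell j, ← hPu, ← ell_phi hf6 ((Rmat fc ^ j).mulVec u)]
    exact ell_congr hf6 (phi_pow_dvd hf6 j u)
  have hR5 : ∀ v : Fin 6 → k, ((Rmat fc).mulVec v) 5 = v 4 - fc 5 / fc 6 * v 5 := by
    intro v
    simp only [Rmat, Matrix.mulVec, dotProduct, Fin.sum_univ_six, Matrix.of_apply,
      Fin.val_zero, Fin.val_one, show ((2:Fin 6):ℕ) = 2 from rfl, show ((3:Fin 6):ℕ) = 3 from rfl, show ((4:Fin 6):ℕ) = 4 from rfl, show ((5:Fin 6):ℕ) = 5 from rfl]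
    norm_num
    ring
  have hR4 : ∀ v : Fin 6 → k, ((Rmat fc).mulVec v) 4 = v 3 - fc 4 / fc 6 * v 5 := by
    intro v
    simp only [Rmat, Matrix.mulVec, dotProduct, Fin.sum_univ_six, Matrix.of_apply,
      Fin.val_zero, Fin.val_one, show ((2:Fin 6):ℕ) = 2 from rfl, show ((3:Fin 6):ℕ) = 3 from rfl, show ((4:Fin 6):ℕ) = 4 from rfl, show ((5:Fin 6):ℕ) = 5 from rfl]
    norm_num
    ring
  have hR3 : ∀ v : Fin 6 → k, ((Rmat fc).mulVec v) 3 = v 2 - fc 3 / fc 6 * v 5 := by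
    intro v
    simp only [Rmat, Matrix.mulVec, dotProduct, Fin.sum_univ_six, Matrix.of_apply,
      Fin.val_zero, Fin.val_one, show ((2:Fin 6):ℕ) = 2 from rfl, show ((3:Fin 6):ℕ) = 3 from rfl, show ((4:Fin 6):ℕ) = 4 from rfl, show ((5:Fin 6):ℕ) = 5 from rfl]
    norm_num
    ring
  have hR2 : ∀ v : Fin 6 → k, ((Rmat fc).mulVec v) 2 = v 1 - fc 2 / fc 6 * v 5 := by
    intro v
    simp only [Rmat, Matrix.mulVec, dotProduct, Fin.sum_univ_six, Matrix.of_apply,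
      Fin.val_zero, Fin.val_one, show ((2:Fin 6):ℕ) = 2 from rfl, show ((3:Fin 6):ℕ) = 3 from rfl, show ((4:Fin 6):ℕ) = 4 from rfl, show ((5:Fin 6):ℕ) = 5 from rfl]
    norm_num
    ring
  have hu5 : u 5 = 0 := by
    have h := (hQR 0).symm.trans hQ0
    rwa [pow_zero, Matrix.one_mulVec] at h
  have hq1 : u 4 - fc 5 / fc 6 * u 5 = 0 := by
    have h := (hQR 1).symm.trans hQ1
    rwa [pow_one, hR5] at h
  have hu4 : u 4 = 0 := by rw [hu5] at hq1; simpa using hq1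
  have h2 : (Rmat fc ^ 2).mulVec u = (Rmat fc).mulVec ((Rmat fc).mulVec u) := by
    rw [pow_two, ← Matrix.mulVec_mulVec]
  have hu3 : u 3 = 0 := by
    have h := (hQR 2).symm.trans hQ2
    rw [h2, hR5, hR4, hR5, hu5, hu4] at h
    simpa using h
  have h3 : (Rmat fc ^ 3).mulVec u
      = (Rmat fc).mulVec ((Rmat fc).mulVec ((Rmat fc).mulVec u)) := by
    rw [pow_succ, pow_two, ← Matrix.mulVec_mulVec, ← Matrix.mulVec_mulVec]
  have h4 : (Rmat fc ^ 4).mulVec u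
      = (Rmat fc).mulVec ((Rmat fc).mulVec ((Rmat fc).mulVec ((Rmat fc).mulVec u))) := by
    rw [pow_succ, pow_succ, pow_two, ← Matrix.mulVec_mulVec, ← Matrix.mulVec_mulVec,
      ← Matrix.mulVec_mulVec]
  have hQ3val : Qform fc d 3 w = u 2 := by
    rw [hQR 3, h3]
    simp only [hR5, hR4, hR3]
    rw [hu5, hu4, hu3]
    ring
  have hQ4val : Qform fc d 4 w = u 1 - fc 5 / fc 6 * u 2 := by
    rw [hQR 4, h4]
    simp only [hR5, hR4, hR3, hR2]
    rw [hu5, hu4, hu3]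
    ring
  refine ⟨hu3, hu4, hu5, hQ3val.symm, ?_⟩
  rw [hQ3val, hQ4val]
  show fc 6 * u 1 = _
  field_simp
  ring
end
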